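/- arXiv:0804.4626 — 5 statements merged into one kernel-verified Lean document; each statement's English description precedes it below -/
import Mathlib

section
/- If a rectangle partition (m^l) (i.e., l rows each of length m) is contained as a subdiagram (possibly after 180° rotation) in a skew diagram λ/μ, then every partition ν with Littlewood–Richardson coefficient c(λ; μ, ν) ≠ 0 contains the rectangle (m^l), i.e., ν has at least l parts of size at least m. -/
/-- `f : ℕ → ℕ` represents a partition (0-indexed parts): weakly decreasing
and eventually zero. -/
def IsPartition (f : ℕ → ℕ) : Prop :=
  (∀ ⦃i j : ℕ⦄, i ≤ j → f j ≤ f i) ∧ ∃ N, ∀ i, N ≤ i → f i = 0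

/-- The box `(i, j)` (row `i`, column `j`, both 0-indexed) lies in the skew
diagram `l / m`. -/
def InSkew (l m : ℕ → ℕ) (p : ℕ × ℕ) : Prop :=
  m p.1 ≤ p.2 ∧ p.2 < l p.1

/-- `T` is a Littlewood–Richardson tableau of skew shape `l / m` and content `n`:
entries are positive exactly on the shape, rows weakly increase, columns strictly
increase, the number of entries equal to `k + 1` is `n k`, and every prefix of the
reverse reading word (right to left, top to bottom) is a lattice word. -/
structure IsLR (l m n : ℕ → ℕ) (T : ℕ → ℕ → ℕ) : Prop where
  support : ∀ p : ℕ × ℕ, T p.1 p.2 ≠ 0 ↔ InSkew l m p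
  row_weak : ∀ i j, InSkew l m (i, j) → InSkew l m (i, j + 1) → T i j ≤ T i (j + 1)
  col_strict : ∀ i j, InSkew l m (i, j) → InSkew l m (i + 1, j) → T i j < T (i + 1) j
  content : ∀ k : ℕ, Nat.card {p : ℕ × ℕ // T p.1 p.2 = k + 1} = n k
  lattice : ∀ i j k : ℕ,
    Nat.card {p : ℕ × ℕ // T p.1 p.2 = k + 2 ∧ (p.1 < i ∨ (p.1 = i ∧ j ≤ p.2))} ≤
      Nat.card {p : ℕ × ℕ // T p.1 p.2 = k + 1 ∧ (p.1 < i ∨ (p.1 = i ∧ j ≤ p.2))}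

/-- The Littlewood–Richardson coefficient `c(l; m, n)`: the number of LR tableaux
of shape `l / m` and content `n`. -/
noncomputable def LR (l m n : ℕ → ℕ) : ℕ :=
  Nat.card {T : ℕ → ℕ → ℕ // IsLR l m n T}

/-- The partition `a` is contained in the skew diagram `l / m`: some translate
of `a`, or of `a` rotated by 180°, is a subset of the diagram. -/
def ContainedIn (a l m : ℕ → ℕ) : Prop :=
  (∃ r c, ∀ i j, j < a i → InSkew l m (r + i, c + j)) ∨
  (∃ r c, ∀ i j, j < a i → i ≤ r ∧ j ≤ c ∧ InSkew l m (r - i, c - j))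

/-- The complement of `f` in the rectangle with `L` rows of length `k`,
rotated by 180°, regarded as a partition. -/
def RotCompl (k L : ℕ) (f : ℕ → ℕ) : ℕ → ℕ :=
  fun i => if i < L then k - f (L - 1 - i) else 0

section AuxLemmas

variable {l m n : ℕ → ℕ} {T : ℕ → ℕ → ℕ}

lemma fin_aux (hl : IsPartition l) (hT : IsLR l m n T) (v : ℕ) (P : ℕ × ℕ → Prop) :
    {p : ℕ × ℕ | T p.1 p.2 = v + 1 ∧ P p}.Finite := by
  obtain ⟨N, hN⟩ := hl.2
  apply Set.Finite.subset ((Set.finite_Iio N).prod (Set.finite_Iio (l 0)))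
  rintro ⟨i, j⟩ ⟨hv, -⟩
  have hsk : InSkew l m (i, j) := (hT.support (i, j)).1 (by simp [hv])
  obtain ⟨h1, h2⟩ := hsk
  constructor
  · by_contra h
    have := hN i (le_of_not_gt h)
    simp only [this] at h2
    omega
  · exact lt_of_lt_of_le h2 (hl.1 (Nat.zero_le i))

lemma row_mono (hT : IsLR l m n T) {i j : ℕ} (h1 : InSkew l m (i, j)) :
    ∀ j', j ≤ j' → InSkew l m (i, j') → T i j ≤ T i j' := by
  intro j' hle
  induction j', hle using Nat.le_induction with
  | base => exact fun _ => le_rfl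
  | succ x hx ih =>
    intro h2
    have hx' : InSkew l m (i, x) := ⟨le_trans h1.1 hx, lt_trans (Nat.lt_succ_self x) h2.2⟩
    exact le_trans (ih hx') (hT.row_weak i x hx' h2)

lemma lattice_ncard (hT : IsLR l m n T) (i j k : ℕ) :
    {p : ℕ × ℕ | T p.1 p.2 = k + 2 ∧ (p.1 < i ∨ (p.1 = i ∧ j ≤ p.2))}.ncard ≤
      {p : ℕ × ℕ | T p.1 p.2 = k + 1 ∧ (p.1 < i ∨ (p.1 = i ∧ j ≤ p.2))}.ncard := by
  rw [← Nat.card_coe_set_eq, ← Nat.card_coe_set_eq]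
  exact hT.lattice i j k

lemma partner (hl : IsPartition l) (hT : IsLR l m n T) {i j k : ℕ} (hij : T i j = k + 2) :
    ∃ p : ℕ × ℕ, T p.1 p.2 = k + 1 ∧ p.1 < i := by
  have hfinA := fin_aux hl hT (k + 1) (fun p => p.1 < i ∨ (p.1 = i ∧ j ≤ p.2))
  have hAn : 0 < {p : ℕ × ℕ | T p.1 p.2 = k + 2 ∧ (p.1 < i ∨ (p.1 = i ∧ j ≤ p.2))}.ncard :=
    (Set.ncard_pos hfinA).2 ⟨(i, j), hij, Or.inr ⟨rfl, le_rfl⟩⟩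
  have hle := lattice_ncard hT i j k
  have hBne := Set.nonempty_of_ncard_ne_zero
    (s := {p : ℕ × ℕ | T p.1 p.2 = k + 1 ∧ (p.1 < i ∨ (p.1 = i ∧ j ≤ p.2))}) (by omega)
  obtain ⟨p, hp1, hp2⟩ := hBne
  rcases hp2 with h | h
  · exact ⟨p, hp1, h⟩
  · exfalso
    have hski : InSkew l m (i, j) := (hT.support (i, j)).1 (by simp [hij])
    have hskp : InSkew l m (i, p.2) := by
      have h2 := (hT.support p).1 (by simp [hp1])
      rw [← h.1]; exact h2
    have hrm := row_mono hT hski p.2 h.2 hskp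
    have hp1' : T i p.2 = k + 1 := by rw [← h.1]; exact hp1
    omega

lemma vbound (hl : IsPartition l) (hT : IsLR l m n T) : ∀ i j, T i j ≤ i + 1 := by
  intro i
  induction i using Nat.strong_induction_on with
  | _ i ih =>
    intro j
    by_cases h0 : T i j ≤ 1
    · omega
    · obtain ⟨k, hk⟩ : ∃ k, T i j = k + 2 := ⟨T i j - 2, by omega⟩
      obtain ⟨p, hp1, hp2⟩ := partner hl hT hk
      have := ih p.1 hp2 p.2
      omega

lemma star (hl : IsPartition l) (hT : IsLR l m n T) (k : ℕ) :
    ∀ ρ, {p : ℕ × ℕ | T p.1 p.2 = k + 2 ∧ p.1 < ρ}.ncard ≤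
      {p : ℕ × ℕ | T p.1 p.2 = k + 1 ∧ p.1 + 1 < ρ}.ncard := by
  intro ρ
  induction ρ with
  | zero => simp
  | succ ρ ih =>
    by_cases hex : ∃ j, T ρ j = k + 2
    · have hj0spec : T ρ (Nat.find hex) = k + 2 := Nat.find_spec hex
      have hA : {p : ℕ × ℕ | T p.1 p.2 = k + 2 ∧ p.1 < ρ + 1} =
          {p : ℕ × ℕ | T p.1 p.2 = k + 2 ∧ (p.1 < ρ ∨ (p.1 = ρ ∧ Nat.find hex ≤ p.2))} := by
        ext ⟨a, b⟩
        simp only [Set.mem_setOf_eq]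
        constructor
        · rintro ⟨h1, h2⟩
          refine ⟨h1, ?_⟩
          rcases Nat.lt_or_ge a ρ with h | h
          · exact Or.inl h
          · have ha : a = ρ := by omega
            subst ha
            exact Or.inr ⟨rfl, Nat.find_min' hex h1⟩
        · rintro ⟨h1, h2⟩
          exact ⟨h1, by omega⟩
      have hB : {p : ℕ × ℕ | T p.1 p.2 = k + 1 ∧ (p.1 < ρ ∨ (p.1 = ρ ∧ Nat.find hex ≤ p.2))} =
          {p : ℕ × ℕ | T p.1 p.2 = k + 1 ∧ p.1 + 1 < ρ + 1} := by
        ext ⟨a, b⟩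
        simp only [Set.mem_setOf_eq]
        constructor
        · rintro ⟨h1, h2⟩
          rcases h2 with h | ⟨h, hle⟩
          · exact ⟨h1, by omega⟩
          · exfalso
            subst h
            have hsk1 : InSkew l m (a, Nat.find hex) := (hT.support (a, Nat.find hex)).1 (by simp [hj0spec])
            have hsk2 : InSkew l m (a, b) := (hT.support (a, b)).1 (by simp [h1])
            have := row_mono hT hsk1 b hle hsk2
            omega
        · rintro ⟨h1, h2⟩
          exact ⟨h1, Or.inl (by omega)⟩
      rw [hA, ← hB]
      exact lattice_ncard hT ρ (Nat.find hex) k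
    · have hA : {p : ℕ × ℕ | T p.1 p.2 = k + 2 ∧ p.1 < ρ + 1} =
          {p : ℕ × ℕ | T p.1 p.2 = k + 2 ∧ p.1 < ρ} := by
        ext ⟨a, b⟩
        simp only [Set.mem_setOf_eq]
        constructor
        · rintro ⟨h1, h2⟩
          refine ⟨h1, ?_⟩
          rcases Nat.lt_or_ge a ρ with h | h
          · exact h
          · exact absurd ⟨b, by rw [show ρ = a by omega]; exact h1⟩ hex
        · rintro ⟨h1, h2⟩
          exact ⟨h1, by omega⟩
      rw [hA]
      refine le_trans ih (Set.ncard_le_ncard ?_ (fin_aux hl hT k _))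
      rintro ⟨a, b⟩ ⟨h1, h2⟩
      exact ⟨h1, by omega⟩

lemma star' (hl : IsPartition l) (hT : IsLR l m n T) (k c R : ℕ) :
    {p : ℕ × ℕ | T p.1 p.2 = k + 2 ∧ p.1 + c < R}.ncard ≤
      {p : ℕ × ℕ | T p.1 p.2 = k + 1 ∧ p.1 + c + 1 < R}.ncard := by
  have h1 : {p : ℕ × ℕ | T p.1 p.2 = k + 2 ∧ p.1 + c < R} =
      {p : ℕ × ℕ | T p.1 p.2 = k + 2 ∧ p.1 < R - c} := by
    ext p
    simp only [Set.mem_setOf_eq]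
    constructor <;> (rintro ⟨u, v⟩; exact ⟨u, by omega⟩)
  have h2 : {p : ℕ × ℕ | T p.1 p.2 = k + 1 ∧ p.1 + c + 1 < R} =
      {p : ℕ × ℕ | T p.1 p.2 = k + 1 ∧ p.1 + 1 < R - c} := by
    ext p
    simp only [Set.mem_setOf_eq]
    constructor <;> (rintro ⟨u, v⟩; exact ⟨u, by omega⟩)
  rw [h1, h2]
  exact star hl hT k (R - c)

lemma claim_lemma (hl : IsPartition l) (hT : IsLR l m n T) (R C K M : ℕ) :
    ∀ a u s, R + K + 2 ≤ u + a → 1 ≤ u →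
      (∑ t ∈ Finset.Icc (u + s) (R + K + 1),
        ((Finset.range M).filter (fun b => T (R + K) (C + b) = t)).card) ≤
      {p : ℕ × ℕ | T p.1 p.2 = u ∧ p.1 + s < R + K + 1}.ncard := by
  intro a
  induction a with
  | zero =>
    intro u s hg hu
    rw [Finset.Icc_eq_empty (by omega), Finset.sum_empty]
    exact Nat.zero_le _
  | succ a ih =>
    intro u s hg hu
    obtain ⟨k, rfl⟩ : ∃ k, u = k + 1 := ⟨u - 1, by omega⟩
    have hs1 : ∀ s', (∑ t ∈ Finset.Icc (k + 2 + s') (R + K + 1),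
        ((Finset.range M).filter (fun b => T (R + K) (C + b) = t)).card) ≤
        {p : ℕ × ℕ | T p.1 p.2 = k + 1 ∧ p.1 + s' + 1 < R + K + 1}.ncard := by
      intro s'
      exact le_trans (ih (k + 2) s' (by omega) (by omega)) (star' hl hT k s' (R + K + 1))
    match s with
    | s' + 1 =>
      have e1 : k + 1 + (s' + 1) = k + 2 + s' := by omega
      rw [e1]
      exact hs1 s'
    | 0 =>
      rcases Nat.lt_or_ge (R + K + 1) (k + 1) with h | h
      · rw [Finset.Icc_eq_empty (by omega), Finset.sum_empty]
        exact Nat.zero_le _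
      · have hins : Finset.Icc (k + 1 + 0) (R + K + 1) =
            insert (k + 1) (Finset.Icc (k + 2) (R + K + 1)) := by
          ext x
          simp only [Finset.mem_Icc, Finset.mem_insert]
          omega
        rw [hins, Finset.sum_insert (by simp [Finset.mem_Icc])]
        have hbnd : ((Finset.range M).filter (fun b => T (R + K) (C + b) = k + 1)).card ≤
            {p : ℕ × ℕ | T p.1 p.2 = k + 1 ∧ p.1 + 1 = R + K + 1}.ncard := by
          classical
          set s0 := (Finset.range M).filter (fun b => T (R + K) (C + b) = k + 1) with hs0
          have hinj : Set.InjOn (fun b => ((R + K, C + b) : ℕ × ℕ)) ↑s0 := by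
            intro x _ y _ hxy
            have := congrArg Prod.snd hxy
            simp only at this
            omega
          have hsub : ↑(s0.image (fun b => ((R + K, C + b) : ℕ × ℕ))) ⊆
              {p : ℕ × ℕ | T p.1 p.2 = k + 1 ∧ p.1 + 1 = R + K + 1} := by
            intro p hp
            simp only [Finset.coe_image, Set.mem_image, Finset.mem_coe, hs0,
              Finset.mem_filter, Finset.mem_range] at hp
            obtain ⟨b, ⟨hb1, hb2⟩, rfl⟩ := hp
            exact ⟨hb2, rfl⟩
          calc s0.card = (s0.image (fun b => ((R + K, C + b) : ℕ × ℕ))).card :=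
                (Finset.card_image_of_injOn hinj).symm
            _ = (↑(s0.image (fun b => ((R + K, C + b) : ℕ × ℕ))) : Set (ℕ × ℕ)).ncard :=
                (Set.ncard_coe_finset _).symm
            _ ≤ _ := Set.ncard_le_ncard hsub (fin_aux hl hT k _)
        have hrest := hs1 0
        have hunion : {p : ℕ × ℕ | T p.1 p.2 = k + 1 ∧ p.1 + 0 < R + K + 1} =
            {p : ℕ × ℕ | T p.1 p.2 = k + 1 ∧ p.1 + 1 = R + K + 1} ∪
            {p : ℕ × ℕ | T p.1 p.2 = k + 1 ∧ p.1 + 0 + 1 < R + K + 1} := by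
          ext p
          simp only [Set.mem_setOf_eq, Set.mem_union]
          constructor
          · rintro ⟨h1, h2⟩
            rcases (by omega : p.1 + 1 = R + K + 1 ∨ p.1 + 0 + 1 < R + K + 1) with h3 | h3
            · exact Or.inl ⟨h1, h3⟩
            · exact Or.inr ⟨h1, h3⟩
          · rintro (⟨h1, h2⟩ | ⟨h1, h2⟩) <;> exact ⟨h1, by omega⟩
        rw [hunion, Set.ncard_union_eq ?_ (fin_aux hl hT k _) (fin_aux hl hT k _)]
        · exact Nat.add_le_add hbnd hrest
        · rw [Set.disjoint_left]
          rintro p ⟨h1, h2⟩ ⟨h3, h4⟩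
          omega

end AuxLemmas

/-- If a rectangle `(M^L)` is contained in the skew diagram `l / m`, then every
partition `n` with `c(l; m, n) ≠ 0` contains the rectangle `(M^L)`. -/
theorem stmt0 (l m : ℕ → ℕ) (hl : IsPartition l) (hm : IsPartition m)
    (hml : ∀ i, m i ≤ l i) (M L : ℕ)
    (hrect : ContainedIn (fun i => if i < L then M else 0) l m)
    (n : ℕ → ℕ) (hn : IsPartition n) (hLR : LR l m n ≠ 0) :
    ∀ i, i < L → M ≤ n i := by
  intro i hiL
  rcases Nat.eq_zero_or_pos M with hM | hM
  · omega
  obtain ⟨K, rfl⟩ : ∃ K, L = K + 1 := ⟨L - 1, by omega⟩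
  obtain ⟨T, hT⟩ : ∃ T, IsLR l m n T := by
    rw [LR] at hLR
    obtain ⟨⟨T, hT⟩⟩ := (Nat.card_ne_zero.mp hLR).1
    exact ⟨T, hT⟩
  obtain ⟨R, C, hRC⟩ : ∃ R C, ∀ a b, a ≤ K → b < M → InSkew l m (R + a, C + b) := by
    rcases hrect with ⟨r, c, h⟩ | ⟨r, c, h⟩
    · refine ⟨r, c, fun a b ha hb => h a b ?_⟩
      have h2 : a < K + 1 := by omega
      simpa [h2] using hb
    · have hKr : K ≤ r := (h K 0 (by simpa using hM)).1
      have hMc : M - 1 ≤ c := (h 0 (M - 1) (by simp; omega)).2.1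
      refine ⟨r - K, c - (M - 1), fun a b ha hb => ?_⟩
      obtain ⟨h1, h2, h3⟩ := h (K - a) (M - 1 - b) (by
        have h4 : K - a < K + 1 := by omega
        show M - 1 - b < if K - a < K + 1 then M else 0
        rw [if_pos h4]
        omega)
      have e1 : r - K + a = r - (K - a) := by omega
      have e2 : c - (M - 1) + b = c - (M - 1 - b) := by omega
      rw [e1, e2]
      exact h3
  have hcol : ∀ a, a ≤ K → ∀ b, b < M → a + 1 ≤ T (R + a) (C + b) := by
    intro a
    induction a with
    | zero =>
      intro _ b hb
      have h : T (R + 0) (C + b) ≠ 0 := (hT.support (R + 0, C + b)).2 (hRC 0 b (by omega) hb)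
      omega
    | succ a ihc =>
      intro ha b hb
      have h1 := ihc (by omega) b hb
      have h2 : T (R + a) (C + b) < T (R + a + 1) (C + b) :=
        hT.col_strict (R + a) (C + b) (hRC a b (by omega) hb) (hRC (a + 1) b ha hb)
      show a + 1 + 1 ≤ T (R + a + 1) (C + b)
      omega
  have hTlow : ∀ b, b < M → K + 1 ≤ T (R + K) (C + b) := fun b hb => hcol K le_rfl b hb
  have hThigh : ∀ b, T (R + K) (C + b) ≤ R + K + 1 := fun b => vbound hl hT (R + K) (C + b)
  have hM0 : M = ∑ t ∈ Finset.Icc (K + 1) (R + K + 1),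
      ((Finset.range M).filter (fun b => T (R + K) (C + b) = t)).card := by
    classical
    have h0 := Finset.card_eq_sum_card_fiberwise (f := fun b => T (R + K) (C + b))
      (s := Finset.range M) (t := Finset.Icc (K + 1) (R + K + 1)) (fun b hb => by
        rw [Finset.mem_coe, Finset.mem_Icc]
        exact ⟨hTlow b (Finset.mem_range.1 hb), hThigh b⟩)
    simpa using h0
  have hclaim := claim_lemma hl hT R C K M (R + 1) (K + 1) 0 (by omega) (by omega)
  have hfin : {p : ℕ × ℕ | T p.1 p.2 = K + 1}.Finite := by
    apply Set.Finite.subset (fin_aux hl hT K (fun _ => True))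
    exact fun p hp => ⟨hp, trivial⟩
  have hnK : {p : ℕ × ℕ | T p.1 p.2 = K + 1}.ncard = n K := by
    rw [← Nat.card_coe_set_eq]
    exact hT.content K
  have hMnK : M ≤ n K := by
    calc M = _ := hM0
      _ ≤ {p : ℕ × ℕ | T p.1 p.2 = K + 1 ∧ p.1 + 0 < R + K + 1}.ncard := hclaim
      _ ≤ {p : ℕ × ℕ | T p.1 p.2 = K + 1}.ncard :=
        Set.ncard_le_ncard (fun p hp => hp.1) hfin
      _ = n K := hnK
  exact le_trans hMnK (hn.1 (by omega : i ≤ K))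
end

section
/- Let λ/μ be a skew diagram, and let α be the partition obtained by sorting the row lengths λ_i − μ_i (taking only positive values) into weakly decreasing order. Then c(λ; μ, α) ≠ 0, i.e., the character [α] appears in the skew character [λ/μ]. -/
namespace LRAux
open Finset

/-- Number of rows `i' ≤ i` whose row length is at least `d`. -/
def cnt (l m : ℕ → ℕ) (i d : ℕ) : ℕ :=
  ((Finset.range (i+1)).filter (fun i' => d ≤ l i' - m i')).card

/-- The canonical LR filling: the box `(i, j)` gets the number of rows `i' ≤ i`
whose length is at least `l i - j` (the distance from `j` to the right end). -/
def T0 (l m : ℕ → ℕ) (i j : ℕ) : ℕ :=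
  if m i ≤ j ∧ j < l i then cnt l m i (l i - j) else 0

variable {l m : ℕ → ℕ}

lemma cnt_succ (i d : ℕ) :
    cnt l m (i+1) d = cnt l m i d + if d ≤ l (i+1) - m (i+1) then 1 else 0 := by
  unfold cnt
  rw [Finset.range_add_one, Finset.filter_insert]
  split
  · rw [Finset.card_insert_of_notMem (by simp)]
  · simp

lemma cnt_anti (i : ℕ) {d1 d2 : ℕ} (h : d1 ≤ d2) : cnt l m i d2 ≤ cnt l m i d1 := by
  apply Finset.card_le_card
  intro x hx
  simp only [Finset.mem_filter] at *
  exact ⟨hx.1, le_trans h hx.2⟩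

lemma cnt_lt {i1 i2 : ℕ} (h : i1 < i2) (d : ℕ) (hd : d ≤ l i2 - m i2) :
    cnt l m i1 d < cnt l m i2 d := by
  apply Finset.card_lt_card
  constructor
  · exact Finset.filter_subset_filter _ (Finset.range_subset_range.mpr (by omega))
  · intro hsub
    have : i2 ∈ (Finset.range (i2+1)).filter (fun i' => d ≤ l i' - m i') := by
      simp [hd]
    have := hsub this
    simp only [Finset.mem_filter, Finset.mem_range] at this
    omega

lemma cnt_pos (i d : ℕ) (hd : d ≤ l i - m i) : 1 ≤ cnt l m i d := by
  unfold cnt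
  rw [Nat.succ_le_iff, Finset.card_pos]
  exact ⟨i, by simp [hd]⟩

lemma cnt_inj {i1 i2 d : ℕ} (h1 : d ≤ l i1 - m i1) (h2 : d ≤ l i2 - m i2)
    (h : cnt l m i1 d = cnt l m i2 d) : i1 = i2 := by
  rcases lt_trichotomy i1 i2 with hlt | heq | hgt
  · exact absurd h (Nat.ne_of_lt (cnt_lt hlt d h2))
  · exact heq
  · exact absurd h.symm (Nat.ne_of_lt (cnt_lt hgt d h1))

lemma cnt_surj (d : ℕ) : ∀ i v, 1 ≤ v → v ≤ cnt l m i d →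
    ∃ i'', i'' ≤ i ∧ d ≤ l i'' - m i'' ∧ cnt l m i'' d = v := by
  intro i
  induction i with
  | zero =>
    intro v hv hvc
    have h0 : cnt l m 0 d = if d ≤ l 0 - m 0 then 1 else 0 := by
      unfold cnt
      rw [Finset.range_one, Finset.filter_singleton]
      split <;> simp
    by_cases hc : d ≤ l 0 - m 0
    · rw [h0, if_pos hc] at hvc
      exact ⟨0, le_refl _, hc, by rw [h0, if_pos hc]; omega⟩
    · rw [h0, if_neg hc] at hvc; omega
  | succ i ih =>
    intro v hv hvc
    rw [cnt_succ] at hvc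
    split at hvc
    · rcases Nat.lt_or_ge v (cnt l m i d + 1) with hlt | hge
      · obtain ⟨i'', h1, h2, h3⟩ := ih v hv (by omega)
        exact ⟨i'', by omega, h2, h3⟩
      · refine ⟨i+1, le_refl _, by assumption, ?_⟩
        rw [cnt_succ]
        split
        · omega
        · omega
    · obtain ⟨i'', h1, h2, h3⟩ := ih v hv (by omega)
      exact ⟨i'', by omega, h2, h3⟩

lemma T0_eq {v i j : ℕ} (hv : 1 ≤ v) (h : T0 l m i j = v) :
    m i ≤ j ∧ j < l i ∧ cnt l m i (l i - j) = v := by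
  unfold T0 at h
  split at h
  · exact ⟨by tauto, by tauto, h⟩
  · omega

lemma natCard_nat {P : ℕ → Prop} [DecidablePred P] (M : ℕ) (h : ∀ i, P i → i < M) :
    Nat.card {i : ℕ // P i} = ((Finset.range M).filter P).card := by
  have hs : {i : ℕ | P i} = ↑((Finset.range M).filter P) := by
    ext x
    simp only [Finset.coe_filter, Finset.mem_range, Set.mem_setOf_eq]
    exact ⟨fun hp => ⟨h x hp, hp⟩, fun hp => hp.2⟩
  have h2 : Nat.card {i : ℕ // P i} = Set.ncard {i : ℕ | P i} := Nat.card_coe_set_eq _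
  rw [h2, hs, Set.ncard_coe_finset]

lemma natCard_pair {P : ℕ × ℕ → Prop} [DecidablePred P] (M1 M2 : ℕ)
    (h : ∀ p, P p → p.1 < M1 ∧ p.2 < M2) :
    Nat.card {p : ℕ × ℕ // P p} =
      ((Finset.range M1 ×ˢ Finset.range M2).filter P).card := by
  have hs : {p : ℕ × ℕ | P p} = ↑((Finset.range M1 ×ˢ Finset.range M2).filter P) := by
    ext x
    simp only [Finset.coe_filter, Finset.mem_product, Finset.mem_range, Set.mem_setOf_eq]
    exact ⟨fun hp => ⟨h x hp, hp⟩, fun hp => hp.2⟩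
  have h2 : Nat.card {p : ℕ × ℕ // P p} = Set.ncard {p : ℕ × ℕ | P p} :=
    Nat.card_coe_set_eq _
  rw [h2, hs, Set.ncard_coe_finset]

lemma count_core (l m : ℕ → ℕ) (hml : ∀ i, m i ≤ l i)
    (hmono : ∀ ⦃i j : ℕ⦄, i ≤ j → l j ≤ l i)
    (N B : ℕ) (hB : l 0 ≤ B)
    (v : ℕ) (hv : 1 ≤ v)
    (R : ℕ × ℕ → Prop) [DecidablePred R] (D : ℕ → ℕ)
    (hD : ∀ i, D i ≤ l i - m i)
    (hR : ∀ i j, m i ≤ j → j < l i → (R (i, j) ↔ l i - j ≤ D i)) :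
    ((Finset.range N ×ˢ Finset.range B).filter
        (fun p => T0 l m p.1 p.2 = v ∧ R p)).card
      = ∑ d ∈ Finset.Icc 1 B,
          ((Finset.range N).filter (fun i => d ≤ D i ∧ cnt l m i d = v)).card := by
  rw [Finset.card_eq_sum_card_fiberwise (f := fun p => l p.1 - p.2)
    (t := Finset.Icc 1 B) ?H]
  case H =>
    intro p hp
    simp only [Finset.mem_coe, Finset.mem_filter, Finset.mem_product, Finset.mem_range] at hp
    obtain ⟨⟨hpN, hpB⟩, hT, hRp⟩ := hp
    obtain ⟨h1, h2, h3⟩ := T0_eq hv hT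
    have hl0 : l p.1 ≤ B := le_trans (hmono (Nat.zero_le p.1)) hB
    show l p.1 - p.2 ∈ Finset.Icc 1 B
    rw [Finset.mem_Icc]
    omega
  refine Finset.sum_congr rfl (fun d hd => ?_)
  rw [Finset.mem_Icc] at hd
  refine Finset.card_bij' (fun p _ => p.1) (fun i _ => (i, l i - d)) ?_ ?_ ?_ ?_
  · intro p hp
    simp only [Finset.mem_filter, Finset.mem_product, Finset.mem_range] at hp
    obtain ⟨⟨⟨hpN, hpB⟩, hT, hRp⟩, hfib⟩ := hp
    obtain ⟨h1, h2, h3⟩ := T0_eq hv hT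
    simp only [Finset.mem_filter, Finset.mem_range]
    refine ⟨hpN, ?_, ?_⟩
    · rw [← hfib]
      exact (hR p.1 p.2 h1 h2).mp hRp
    · rw [← hfib]; exact h3
  · intro i hi
    simp only [Finset.mem_filter, Finset.mem_range] at hi
    obtain ⟨hiN, hdD, hcnt⟩ := hi
    have hdi : d ≤ l i - m i := le_trans hdD (hD i)
    have hmi : m i ≤ l i := hml i
    have hlB : l i ≤ B := le_trans (hmono (Nat.zero_le i)) hB
    have hcond : m i ≤ l i - d ∧ l i - d < l i := by omega
    have heq : l i - (l i - d) = d := by omega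
    simp only [Finset.mem_filter, Finset.mem_product, Finset.mem_range]
    refine ⟨⟨⟨hiN, by omega⟩, ?_, ?_⟩, heq⟩
    · unfold T0
      rw [if_pos hcond, heq]
      exact hcnt
    · exact (hR i (l i - d) hcond.1 hcond.2).mpr (by rw [heq]; exact hdD)
  · intro p hp
    simp only [Finset.mem_filter, Finset.mem_product, Finset.mem_range] at hp
    obtain ⟨⟨⟨hpN, hpB⟩, hT, hRp⟩, hfib⟩ := hp
    obtain ⟨h1, h2, h3⟩ := T0_eq hv hT
    have h4 : l p.1 - d = p.2 := by omega
    show (p.1, l p.1 - d) = p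
    rw [h4]
  · intro i hi
    rfl

lemma card_ge_eq (f : ℕ → ℕ) (M C : ℕ) (hC : ∀ i, f i ≤ C) (d : ℕ) :
    ((Finset.range M).filter (fun i => d ≤ f i)).card
      = ∑ c ∈ Finset.Icc d C, ((Finset.range M).filter (fun i => f i = c)).card := by
  rw [Finset.card_eq_sum_card_fiberwise (f := f) (t := Finset.Icc d C) ?H]
  case H =>
    intro i hi
    simp only [Finset.mem_coe, Finset.mem_filter] at hi
    rw [Finset.mem_coe, Finset.mem_Icc]
    exact ⟨hi.2, hC i⟩
  refine Finset.sum_congr rfl (fun c hc => ?_)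
  rw [Finset.mem_Icc] at hc
  congr 1
  rw [Finset.filter_filter]
  refine Finset.filter_congr (fun x _ => ?_)
  constructor
  · exact fun h => h.2
  · exact fun h => ⟨by omega, h⟩

lemma count_ge_dec (a : ℕ → ℕ) (hdec : ∀ ⦃i j : ℕ⦄, i ≤ j → a j ≤ a i)
    (Ma : ℕ) (hMa : ∀ i, Ma ≤ i → a i = 0) (d k : ℕ) (hd : 1 ≤ d) :
    (k + 1 ≤ ((Finset.range Ma).filter (fun i => d ≤ a i)).card ↔ d ≤ a k) := by
  constructor
  · intro h
    by_contra hak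
    push_neg at hak
    have hsub : (Finset.range Ma).filter (fun i => d ≤ a i) ⊆ Finset.range k := by
      intro i hi
      simp only [Finset.mem_filter, Finset.mem_range] at *
      by_contra hik
      push_neg at hik
      have := hdec hik
      omega
    have := Finset.card_le_card hsub
    rw [Finset.card_range] at this
    omega
  · intro h
    have hsub : Finset.range (k+1) ⊆ (Finset.range Ma).filter (fun i => d ≤ a i) := by
      intro i hi
      simp only [Finset.mem_range] at hi
      have h1 : d ≤ a i := le_trans h (hdec (by omega))
      have h2 : i < Ma := by
        by_contra hc
        push_neg at hc
        have := hMa i hc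
        omega
      simp only [Finset.mem_filter, Finset.mem_range]
      exact ⟨h2, h1⟩
    have := Finset.card_le_card hsub
    rw [Finset.card_range] at this
    exact this

end LRAux

/-- If `a` is the partition obtained by sorting the (positive) row lengths of
the skew diagram `l / m` into weakly decreasing order, then `c(l; m, a) ≠ 0`. -/
theorem stmt1 (l m a : ℕ → ℕ) (hl : IsPartition l) (hm : IsPartition m)
    (hml : ∀ i, m i ≤ l i) (ha : IsPartition a)
    (hperm : ∀ k : ℕ,
      Nat.card {i : ℕ // l i - m i = k + 1} = Nat.card {i : ℕ // a i = k + 1}) :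
    LR l m a ≠ 0 := by
  classical
  open Finset LRAux in
  obtain ⟨N, hN⟩ := hl.2
  obtain ⟨Ma, hMa⟩ := ha.2
  have hmono := hl.1
  -- boxes of the skew shape lie in `range N ×ˢ range (l 0)`
  have hbound : ∀ p : ℕ × ℕ, InSkew l m p → p.1 < N ∧ p.2 < l 0 := by
    intro p hp
    obtain ⟨h1, h2⟩ := hp
    have h3 : l p.1 ≤ l 0 := hmono (Nat.zero_le p.1)
    constructor
    · by_contra hc
      push_neg at hc
      have := hN p.1 hc
      omega
    · omega
  -- the bridge: at least k+1 rows of length ≥ d iff d ≤ a k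
  have hbridge : ∀ d k' : ℕ, 1 ≤ d →
      (k' + 1 ≤ ((Finset.range N).filter (fun i' => d ≤ l i' - m i')).card ↔ d ≤ a k') := by
    intro d k' hd
    have hC1 : ∀ i, l i - m i ≤ max (l 0) (a 0) := fun i =>
      le_trans (le_trans (Nat.sub_le _ _) (hmono (Nat.zero_le i))) (le_max_left _ _)
    have hC2 : ∀ i, a i ≤ max (l 0) (a 0) := fun i =>
      le_trans (ha.1 (Nat.zero_le i)) (le_max_right _ _)
    have key : ((Finset.range N).filter (fun i' => d ≤ l i' - m i')).card
        = ((Finset.range Ma).filter (fun i' => d ≤ a i')).card := by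
      rw [LRAux.card_ge_eq (fun i => l i - m i) N (max (l 0) (a 0)) hC1 d,
          LRAux.card_ge_eq a Ma (max (l 0) (a 0)) hC2 d]
      refine Finset.sum_congr rfl (fun c hc => ?_)
      rw [Finset.mem_Icc] at hc
      obtain ⟨c', rfl⟩ : ∃ c', c = c' + 1 := ⟨c - 1, by omega⟩
      have hb1 : ∀ i, l i - m i = c' + 1 → i < N := by
        intro i hi
        by_contra hc2
        push_neg at hc2
        have := hN i hc2
        omega
      have hb2 : ∀ i, a i = c' + 1 → i < Ma := by
        intro i hi
        by_contra hc2
        push_neg at hc2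
        have := hMa i hc2
        omega
      rw [← LRAux.natCard_nat N hb1, ← LRAux.natCard_nat Ma hb2]
      exact hperm c'
    rw [key]
    exact LRAux.count_ge_dec a ha.1 Ma hMa d k' hd
  -- a k is at most l 0
  have hakB : ∀ k, a k ≤ l 0 := by
    intro k
    by_cases h0 : a k = 0
    · omega
    · obtain ⟨c', hc'⟩ : ∃ c', a k = c' + 1 := ⟨a k - 1, by omega⟩
      have hb1 : ∀ i, l i - m i = c' + 1 → i < N := by
        intro i hi
        by_contra hc2
        push_neg at hc2
        have := hN i hc2
        omega
      have hb2 : ∀ i, a i = c' + 1 → i < Ma := by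
        intro i hi
        by_contra hc2
        push_neg at hc2
        have := hMa i hc2
        omega
      have e1 := LRAux.natCard_nat (P := fun i => l i - m i = c' + 1) N hb1
      have e2 := LRAux.natCard_nat (P := fun i => a i = c' + 1) Ma hb2
      have e3 := hperm c'
      have hk : k ∈ (Finset.range Ma).filter (fun i => a i = c' + 1) := by
        simp only [Finset.mem_filter, Finset.mem_range]
        exact ⟨hb2 k hc', hc'⟩
      have hpos : 0 < ((Finset.range Ma).filter (fun i => a i = c' + 1)).card :=
        Finset.card_pos.mpr ⟨k, hk⟩
      rw [← e2] at hpos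
      rw [← e3] at hpos
      rw [e1] at hpos
      have hpos2 : 0 < ((Finset.range N).filter (fun i => l i - m i = c' + 1)).card := hpos
      obtain ⟨i0, hi0⟩ := Finset.card_pos.mp hpos2
      simp only [Finset.mem_filter, Finset.mem_range] at hi0
      have : l i0 ≤ l 0 := hmono (Nat.zero_le i0)
      omega
  -- the canonical tableau is LR
  have hT0LR : IsLR l m a (T0 l m) := by
    constructor
    · -- support
      intro p
      by_cases hc : m p.1 ≤ p.2 ∧ p.2 < l p.1
      · have hpos := LRAux.cnt_pos (l := l) (m := m) p.1 (l p.1 - p.2)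
          (by have := hml p.1; omega)
        unfold T0
        rw [if_pos hc]
        exact ⟨fun _ => hc, fun _ => by omega⟩
      · unfold T0
        rw [if_neg hc]
        exact ⟨fun h => absurd rfl h, fun h => absurd h hc⟩
    · -- row_weak
      intro i j h1 h2
      obtain ⟨h11, h12⟩ := h1
      obtain ⟨h21, h22⟩ := h2
      simp only at h11 h12 h21 h22
      unfold T0
      rw [if_pos ⟨h11, h12⟩, if_pos ⟨h21, h22⟩]
      exact LRAux.cnt_anti i (by omega)
    · -- col_strict
      intro i j h1 h2
      obtain ⟨h11, h12⟩ := h1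
      obtain ⟨h21, h22⟩ := h2
      simp only at h11 h12 h21 h22
      unfold T0
      rw [if_pos ⟨h11, h12⟩, if_pos ⟨h21, h22⟩]
      have hstep : l (i+1) ≤ l i := hmono (by omega : i ≤ i + 1)
      calc cnt l m i (l i - j) ≤ cnt l m i (l (i+1) - j) :=
            LRAux.cnt_anti i (by omega)
        _ < cnt l m (i+1) (l (i+1) - j) :=
            LRAux.cnt_lt (by omega : i < i + 1) _ (by omega)
    · -- content
      intro k
      have hbnd : ∀ p : ℕ × ℕ, T0 l m p.1 p.2 = k + 1 → p.1 < N ∧ p.2 < l 0 := by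
        intro p hp
        obtain ⟨h1, h2, _⟩ := LRAux.T0_eq (by omega) hp
        exact hbound p ⟨h1, h2⟩
      calc Nat.card {p : ℕ × ℕ // T0 l m p.1 p.2 = k + 1}
          = ((Finset.range N ×ˢ Finset.range (l 0)).filter
              (fun p => T0 l m p.1 p.2 = k + 1)).card := LRAux.natCard_pair N (l 0) hbnd
        _ = ((Finset.range N ×ˢ Finset.range (l 0)).filter
              (fun p => T0 l m p.1 p.2 = k + 1 ∧ True)).card := by
            congr 1
            exact Finset.filter_congr (fun x _ => by simp)
        _ = ∑ d ∈ Finset.Icc 1 (l 0),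
              ((Finset.range N).filter
                (fun i => d ≤ l i - m i ∧ cnt l m i d = k + 1)).card :=
            LRAux.count_core l m hml hmono N (l 0) le_rfl (k+1) (by omega)
              (fun _ => True) (fun i => l i - m i) (fun i => le_rfl)
              (fun i j hj1 hj2 => by simp; omega)
        _ = ∑ d ∈ Finset.Icc 1 (l 0), (if d ≤ a k then 1 else 0) := by
            refine Finset.sum_congr rfl (fun d hd => ?_)
            rw [Finset.mem_Icc] at hd
            by_cases hda : d ≤ a k
            · rw [if_pos hda]
              have hCd : k + 1 ≤ ((Finset.range N).filter (fun i' => d ≤ l i' - m i')).card :=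
                (hbridge d k hd.1).mpr hda
              have hN1 : 1 ≤ N := by
                by_contra hc
                push_neg at hc
                interval_cases N
                simp at hCd
              have hcntN : cnt l m (N-1) d
                  = ((Finset.range N).filter (fun i' => d ≤ l i' - m i')).card := by
                unfold cnt
                rw [show N - 1 + 1 = N by omega]
              obtain ⟨i'', hle, hdd, hc⟩ := LRAux.cnt_surj d (N-1) (k+1) (by omega)
                (by rw [hcntN]; exact hCd)
              have hmem : i'' ∈ (Finset.range N).filter
                  (fun i => d ≤ l i - m i ∧ cnt l m i d = k + 1) := by
                simp only [Finset.mem_filter, Finset.mem_range]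
                exact ⟨by omega, hdd, hc⟩
              have h1 : ((Finset.range N).filter
                  (fun i => d ≤ l i - m i ∧ cnt l m i d = k + 1)).card ≤ 1 :=
                Finset.card_le_one.mpr (fun x hx y hy => by
                  simp only [Finset.mem_filter, Finset.mem_range] at hx hy
                  exact LRAux.cnt_inj hx.2.1 hy.2.1 (hx.2.2.trans hy.2.2.symm))
              have h2 : 0 < ((Finset.range N).filter
                  (fun i => d ≤ l i - m i ∧ cnt l m i d = k + 1)).card :=
                Finset.card_pos.mpr ⟨i'', hmem⟩
              omega
            · rw [if_neg hda]
              rw [Finset.card_eq_zero, Finset.filter_eq_empty_iff]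
              intro i hi
              rw [Finset.mem_range] at hi
              rintro ⟨hd1, hd2⟩
              have hsub : cnt l m i d
                  ≤ ((Finset.range N).filter (fun i' => d ≤ l i' - m i')).card :=
                Finset.card_le_card
                  (Finset.filter_subset_filter _ (Finset.range_subset_range.mpr (by omega)))
              exact hda ((hbridge d k hd.1).mp (by omega))
        _ = ((Finset.Icc 1 (l 0)).filter (fun d => d ≤ a k)).card :=
            (Finset.card_filter _ _).symm
        _ = (Finset.Icc 1 (a k)).card := by
            congr 1
            ext x
            simp only [Finset.mem_filter, Finset.mem_Icc]
            have := hakB k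
            omega
        _ = a k := by
            rw [Nat.card_Icc]
            omega
    · -- lattice
      intro I J k
      have hbnd2 : ∀ v : ℕ, 1 ≤ v → ∀ p : ℕ × ℕ,
          (T0 l m p.1 p.2 = v ∧ (p.1 < I ∨ (p.1 = I ∧ J ≤ p.2))) → p.1 < N ∧ p.2 < l 0 := by
        intro v hv p hp
        obtain ⟨h1, h2, _⟩ := LRAux.T0_eq hv hp.1
        exact hbound p ⟨h1, h2⟩
      have hD : ∀ i, (if i < I then l i - m i
          else if i = I then min (l i - m i) (l i - J) else 0) ≤ l i - m i := by
        intro i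
        split_ifs <;> omega
      have hR : ∀ i j, m i ≤ j → j < l i →
          ((i < I ∨ (i = I ∧ J ≤ j)) ↔ l i - j ≤
            (if i < I then l i - m i else if i = I then min (l i - m i) (l i - J) else 0)) := by
        intro i j h1 h2
        split_ifs with ha1 ha2 <;> omega
      have e1 : ((Finset.range N ×ˢ Finset.range (l 0)).filter
              (fun p => T0 l m p.1 p.2 = k + 2 ∧ (p.1 < I ∨ (p.1 = I ∧ J ≤ p.2)))).card
          = ∑ d ∈ Finset.Icc 1 (l 0), ((Finset.range N).filter
              (fun i => d ≤ (if i < I then l i - m i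
                else if i = I then min (l i - m i) (l i - J) else 0)
                ∧ cnt l m i d = k + 2)).card :=
        LRAux.count_core l m hml hmono N (l 0) le_rfl (k+2) (by omega)
          (fun p => p.1 < I ∨ (p.1 = I ∧ J ≤ p.2))
          (fun i => if i < I then l i - m i else if i = I then min (l i - m i) (l i - J) else 0)
          hD (fun i j h1 h2 => hR i j h1 h2)
      have e2 : ((Finset.range N ×ˢ Finset.range (l 0)).filter
              (fun p => T0 l m p.1 p.2 = k + 1 ∧ (p.1 < I ∨ (p.1 = I ∧ J ≤ p.2)))).card
          = ∑ d ∈ Finset.Icc 1 (l 0), ((Finset.range N).filter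
              (fun i => d ≤ (if i < I then l i - m i
                else if i = I then min (l i - m i) (l i - J) else 0)
                ∧ cnt l m i d = k + 1)).card :=
        LRAux.count_core l m hml hmono N (l 0) le_rfl (k+1) (by omega)
          (fun p => p.1 < I ∨ (p.1 = I ∧ J ≤ p.2))
          (fun i => if i < I then l i - m i else if i = I then min (l i - m i) (l i - J) else 0)
          hD (fun i j h1 h2 => hR i j h1 h2)
      have c1 : Nat.card {p : ℕ × ℕ // T0 l m p.1 p.2 = k + 2 ∧ (p.1 < I ∨ (p.1 = I ∧ J ≤ p.2))}
          = ((Finset.range N ×ˢ Finset.range (l 0)).filter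
              (fun p => T0 l m p.1 p.2 = k + 2 ∧ (p.1 < I ∨ (p.1 = I ∧ J ≤ p.2)))).card :=
        LRAux.natCard_pair N (l 0) (hbnd2 (k+2) (by omega))
      have c2 : Nat.card {p : ℕ × ℕ // T0 l m p.1 p.2 = k + 1 ∧ (p.1 < I ∨ (p.1 = I ∧ J ≤ p.2))}
          = ((Finset.range N ×ˢ Finset.range (l 0)).filter
              (fun p => T0 l m p.1 p.2 = k + 1 ∧ (p.1 < I ∨ (p.1 = I ∧ J ≤ p.2)))).card :=
        LRAux.natCard_pair N (l 0) (hbnd2 (k+1) (by omega))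
      rw [c1, c2, e1, e2]
      refine Finset.sum_le_sum (fun d hd => ?_)
      rw [Finset.mem_Icc] at hd
      rcases Finset.eq_empty_or_nonempty ((Finset.range N).filter
        (fun i => d ≤ (if i < I then l i - m i else if i = I then min (l i - m i) (l i - J) else 0)
          ∧ cnt l m i d = k + 2)) with hA | hA
      · rw [hA]
        simp
      · obtain ⟨i0, hi0⟩ := hA
        simp only [Finset.mem_filter, Finset.mem_range] at hi0
        obtain ⟨hi0N, hdD, hcnt⟩ := hi0
        have hDlen : d ≤ l i0 - m i0 ∧ i0 ≤ I := by
          split_ifs at hdD <;> omega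
        have hk2 : k + 1 ≤ cnt l m i0 d := by omega
        obtain ⟨i'', hle, hdd, hc⟩ := LRAux.cnt_surj d i0 (k+1) (by omega) hk2
        have hne : i'' < i0 := by
          rcases Nat.lt_or_ge i'' i0 with h | h
          · exact h
          · have heq : i'' = i0 := by omega
            rw [heq] at hc
            omega
        have hmem : i'' ∈ (Finset.range N).filter
            (fun i => d ≤ (if i < I then l i - m i
              else if i = I then min (l i - m i) (l i - J) else 0) ∧ cnt l m i d = k + 1) := by
          simp only [Finset.mem_filter, Finset.mem_range]
          refine ⟨by omega, ?_, hc⟩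
          rw [if_pos (by omega : i'' < I)]
          exact hdd
        have hpos : 0 < ((Finset.range N).filter
            (fun i => d ≤ (if i < I then l i - m i
              else if i = I then min (l i - m i) (l i - J) else 0) ∧ cnt l m i d = k + 1)).card :=
          Finset.card_pos.mpr ⟨i'', hmem⟩
        have hle1 : ((Finset.range N).filter
            (fun i => d ≤ (if i < I then l i - m i
              else if i = I then min (l i - m i) (l i - J) else 0) ∧ cnt l m i d = k + 2)).card ≤ 1 :=
          Finset.card_le_one.mpr (fun x hx y hy => by
            simp only [Finset.mem_filter, Finset.mem_range] at hx hy
            have hx2 : d ≤ l x - m x := by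
              have := hx.2.1
              split_ifs at this <;> omega
            have hy2 : d ≤ l y - m y := by
              have := hy.2.1
              split_ifs at this <;> omega
            exact LRAux.cnt_inj hx2 hy2 (hx.2.2.trans hy.2.2.symm))
        omega
  -- every LR tableau has entries bounded by Ma
  have hbd : ∀ T : ℕ → ℕ → ℕ, IsLR l m a T → ∀ i j, T i j ≤ Ma := by
    intro T hT i j
    by_contra h
    push_neg at h
    have hbndT : ∀ p : ℕ × ℕ, T p.1 p.2 = (T i j - 1) + 1 → p.1 < N ∧ p.2 < l 0 := by
      intro p hp
      exact hbound p ((hT.support p).mp (by rw [hp]; omega))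
    have h0 := hT.content (T i j - 1)
    rw [LRAux.natCard_pair N (l 0) hbndT] at h0
    have ha0 : a (T i j - 1) = 0 := hMa _ (by omega)
    have hmem : (i, j) ∈ (Finset.range N ×ˢ Finset.range (l 0)).filter
        (fun p => T p.1 p.2 = (T i j - 1) + 1) := by
      have hin : InSkew l m (i, j) := (hT.support (i, j)).mp (by simp; omega)
      have := hbound (i, j) hin
      simp only [Finset.mem_filter, Finset.mem_product, Finset.mem_range]
      exact ⟨⟨this.1, this.2⟩, by omega⟩
    have := Finset.card_pos.mpr ⟨(i, j), hmem⟩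
    omega
  -- finiteness of the set of LR tableaux
  have hfin : Finite {T : ℕ → ℕ → ℕ // IsLR l m a T} := by
    apply Finite.of_injective
      (f := fun T : {T : ℕ → ℕ → ℕ // IsLR l m a T} =>
        (fun p : (Finset.range N ×ˢ Finset.range (l 0) : Finset (ℕ × ℕ)) =>
          (⟨min (T.1 p.1.1 p.1.2) Ma, by omega⟩ : Fin (Ma + 1))))
    intro T1 T2 h
    apply Subtype.ext
    funext i j
    by_cases hp : (i, j) ∈ Finset.range N ×ˢ Finset.range (l 0)
    · have h2 := congrFun h ⟨(i, j), hp⟩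
      have h3 := congrArg Fin.val h2
      simp only at h3
      have b1 := hbd T1.1 T1.2 i j
      have b2 := hbd T2.1 T2.2 i j
      omega
    · have hn : ¬ InSkew l m (i, j) := by
        intro hs
        have := hbound (i, j) hs
        simp only [Finset.mem_product, Finset.mem_range] at hp
        exact hp ⟨this.1, this.2⟩
      have z1 : T1.1 i j = 0 := by
        by_contra hz
        exact hn ((T1.2.support (i, j)).mp hz)
      have z2 : T2.1 i j = 0 := by
        by_contra hz
        exact hn ((T2.2.support (i, j)).mp hz)
      rw [z1, z2]
  unfold LR
  exact Nat.card_ne_zero.mpr ⟨⟨⟨T0 l m, hT0LR⟩⟩, hfin⟩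
end

section
/- Let A = λ/μ be a skew diagram, and let D be the skew diagram obtained from A by deleting the top box of every column of A. Then there is a bijection between LR tableaux of shape A whose entry in the top box of every column equals 1, and LR tableaux of shape D; the bijection removes all 1's and replaces each entry i ≥ 2 by i − 1. Consequently, if η is any content with c_D(η) ≠ 0 (some LR tableau of D has content η), and j is the number of nonempty columns of A, then c(λ; μ, (j, η_1, η_2, …)) ≠ 0, where (j, η) is the composition prepending j to η (which is a partition since j ≥ η_1). -/
/-- `(i, j)` is the top box of column `j` of the skew diagram `l / m`. -/
def IsTopBox (l m : ℕ → ℕ) (i j : ℕ) : Prop :=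
  InSkew l m (i, j) ∧ ∀ i' < i, ¬ InSkew l m (i', j)

section Aux
open scoped Classical

variable {l m : ℕ → ℕ}

lemma skew_contig (hl : ∀ ⦃i j : ℕ⦄, i ≤ j → l j ≤ l i)
    (hm : ∀ ⦃i j : ℕ⦄, i ≤ j → m j ≤ m i)
    {i₁ i i₂ j : ℕ} (h1 : InSkew l m (i₁, j)) (h2 : InSkew l m (i₂, j))
    (hle1 : i₁ ≤ i) (hle2 : i ≤ i₂) : InSkew l m (i, j) :=
  ⟨le_trans (hm hle1) h1.1, lt_of_lt_of_le h2.2 (hl hle2)⟩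

lemma nontop_iff (hl : ∀ ⦃i j : ℕ⦄, i ≤ j → l j ≤ l i)
    (hm : ∀ ⦃i j : ℕ⦄, i ≤ j → m j ≤ m i)
    {i j : ℕ} (h : InSkew l m (i + 1, j)) :
    ¬ IsTopBox l m (i + 1) j ↔ InSkew l m (i, j) := by
  constructor
  · intro ht
    rw [IsTopBox] at ht
    push_neg at ht
    obtain ⟨i', hi', hs⟩ := ht h
    exact skew_contig hl hm hs h (by omega) (by omega)
  · intro hs ht
    exact ht.2 i (by omega) hs

lemma inD_iff (hl : ∀ ⦃i j : ℕ⦄, i ≤ j → l j ≤ l i)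
    (hm : ∀ ⦃i j : ℕ⦄, i ≤ j → m j ≤ m i) (i j : ℕ) :
    InSkew (fun i => l (i + 1)) m (i, j) ↔ InSkew l m (i, j) ∧ InSkew l m (i + 1, j) := by
  unfold InSkew
  constructor
  · rintro ⟨h1, h2⟩
    exact ⟨⟨h1, lt_of_lt_of_le h2 (hl (Nat.le_succ i))⟩, ⟨le_trans (hm (Nat.le_succ i)) h1, h2⟩⟩
  · rintro ⟨⟨h1, _⟩, ⟨_, h2⟩⟩
    exact ⟨h1, h2⟩

lemma finShape (hl : IsPartition l) : {p : ℕ × ℕ | InSkew l m p}.Finite := by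
  obtain ⟨N, hN⟩ := hl.2
  apply Set.Finite.subset ((Set.finite_Iio N).prod (Set.finite_Iio (l 0)))
  rintro ⟨a, b⟩ hp
  have h2 : b < l a := hp.2
  have h1 : m a ≤ b := hp.1
  constructor
  · by_contra hc
    have : l a = 0 := hN a (by simpa using hc)
    omega
  · exact lt_of_lt_of_le h2 (hl.1 (Nat.zero_le a))

lemma finLevel (hl : IsPartition l) {n : ℕ → ℕ} {T : ℕ → ℕ → ℕ} (hT : IsLR l m n T)
    (Q : ℕ × ℕ → Prop) (k : ℕ) :
    {p : ℕ × ℕ | T p.1 p.2 = k + 1 ∧ Q p}.Finite := by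
  apply (finShape hl).subset
  rintro p ⟨h1, _⟩
  exact (hT.support p).1 (by omega)

lemma col_chain (hl : ∀ ⦃i j : ℕ⦄, i ≤ j → l j ≤ l i)
    (hm : ∀ ⦃i j : ℕ⦄, i ≤ j → m j ≤ m i) {T : ℕ → ℕ → ℕ}
    (hc : ∀ i j, InSkew l m (i, j) → InSkew l m (i + 1, j) → T i j < T (i + 1) j)
    {i₁ j : ℕ} (h1 : InSkew l m (i₁, j)) :
    ∀ i₂, i₁ < i₂ → InSkew l m (i₂, j) → T i₁ j < T i₂ j := by
  intro i₂
  induction i₂ with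
  | zero => omega
  | succ n ih =>
    intro hlt h2
    rcases Nat.lt_or_ge i₁ n with h | h
    · have hn : InSkew l m (n, j) := skew_contig hl hm h1 h2 (by omega) (by omega)
      exact lt_trans (ih h hn) (hc n j hn h2)
    · have : i₁ = n := by omega
      subst this
      exact hc i₁ j h1 h2

def shiftEquiv (P Q : ℕ × ℕ → Prop) (h : ∀ i j, P (i, j) ↔ Q (i + 1, j))
    (h0 : ∀ j, ¬ Q (0, j)) : {p : ℕ × ℕ // P p} ≃ {p : ℕ × ℕ // Q p} where
  toFun := fun ⟨(a, b), hp⟩ => ⟨(a + 1, b), (h a b).1 hp⟩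
  invFun := fun ⟨(a, b), hq⟩ => ⟨(a - 1, b), (h _ _).2 (by
    have ha : a ≠ 0 := fun e => h0 b (e ▸ hq)
    rwa [Nat.sub_add_cancel (Nat.one_le_iff_ne_zero.mpr ha)])⟩
  left_inv := fun ⟨(a, b), hp⟩ => rfl
  right_inv := fun ⟨(a, b), hq⟩ => Subtype.ext (by
    have ha : a ≠ 0 := fun e => h0 b (e ▸ hq)
    simp [Nat.sub_add_cancel (Nat.one_le_iff_ne_zero.mpr ha)])

noncomputable def topEquiv (l m : ℕ → ℕ) :
    {p : ℕ × ℕ // IsTopBox l m p.1 p.2} ≃ {j : ℕ // ∃ i, InSkew l m (i, j)} where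
  toFun := fun ⟨(a, b), hp⟩ => ⟨b, ⟨a, hp.1⟩⟩
  invFun := fun ⟨b, hb⟩ => ⟨(Nat.find hb, b), ⟨Nat.find_spec hb, fun i' hi' => Nat.find_min hb hi'⟩⟩
  left_inv := fun ⟨(a, b), hp⟩ => Subtype.ext (by
    have hex : ∃ i, InSkew l m (i, b) := ⟨a, hp.1⟩
    have h1 : Nat.find hex ≤ a := Nat.find_min' hex hp.1
    have h2 : ¬ Nat.find hex < a := fun hc => hp.2 _ hc (Nat.find_spec hex)
    have : Nat.find hex = a := by omega
    simp [this])
  right_inv := fun ⟨b, hb⟩ => rfl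

end Aux
section Aux2
open scoped Classical

variable {l m : ℕ → ℕ}

/-- Inverse map: rebuild a tableau of shape `l/m` from one of the reduced shape. -/
noncomputable def gmap (l m : ℕ → ℕ) (T' : ℕ → ℕ → ℕ) : ℕ → ℕ → ℕ :=
  fun i j =>
    if InSkew l m (i, j) then (if IsTopBox l m i j then 1 else T' (i - 1) j + 1) else 0

lemma gmap_of_not (T' : ℕ → ℕ → ℕ) {i j : ℕ} (h : ¬ InSkew l m (i, j)) :
    gmap l m T' i j = 0 := by simp [gmap, h]

lemma gmap_of_top (T' : ℕ → ℕ → ℕ) {i j : ℕ} (h : IsTopBox l m i j) :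
    gmap l m T' i j = 1 := by simp [gmap, h, h.1]

lemma gmap_of_nontop (T' : ℕ → ℕ → ℕ) {i j : ℕ} (h : InSkew l m (i, j))
    (h2 : ¬ IsTopBox l m i j) : gmap l m T' i j = T' (i - 1) j + 1 := by
  simp [gmap, h, h2]

lemma gmap_row_zero (T' : ℕ → ℕ → ℕ) (j : ℕ) : gmap l m T' 0 j ≤ 1 := by
  by_cases h : InSkew l m (0, j)
  · rw [gmap_of_top T' ⟨h, fun i' hi' => by omega⟩]
  · rw [gmap_of_not T' h]
    omega

/-- key iff: `gmap` has value `k+2` at `(i+1, j)` iff `T'` has value `k+1` at `(i,j)`. -/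
lemma gmap_succ_iff (hl : ∀ ⦃i j : ℕ⦄, i ≤ j → l j ≤ l i)
    (hm : ∀ ⦃i j : ℕ⦄, i ≤ j → m j ≤ m i)
    {η : ℕ → ℕ} {T' : ℕ → ℕ → ℕ} (hT' : IsLR (fun i => l (i + 1)) m η T')
    (i j k : ℕ) :
    T' i j = k + 1 ↔ gmap l m T' (i + 1) j = k + 2 := by
  constructor
  · intro h
    have hD : InSkew (fun i => l (i + 1)) m (i, j) := (hT'.support (i, j)).1 (by show T' i j ≠ 0; omega)
    rw [inD_iff hl hm] at hD
    have hnt : ¬ IsTopBox l m (i + 1) j := (nontop_iff hl hm hD.2).2 hD.1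
    rw [gmap_of_nontop T' hD.2 hnt]
    simpa using h
  · intro h
    by_cases hs : InSkew l m (i + 1, j)
    · by_cases ht : IsTopBox l m (i + 1) j
      · rw [gmap_of_top T' ht] at h; omega
      · rw [gmap_of_nontop T' hs ht] at h
        simpa using h
    · rw [gmap_of_not T' hs] at h; omega

lemma gmap_eq_one_iff (hl : ∀ ⦃i j : ℕ⦄, i ≤ j → l j ≤ l i)
    (hm : ∀ ⦃i j : ℕ⦄, i ≤ j → m j ≤ m i)
    {η : ℕ → ℕ} {T' : ℕ → ℕ → ℕ} (hT' : IsLR (fun i => l (i + 1)) m η T')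
    (i j : ℕ) : gmap l m T' i j = 1 ↔ IsTopBox l m i j := by
  constructor
  · intro h
    by_cases hs : InSkew l m (i, j)
    · by_cases ht : IsTopBox l m i j
      · exact ht
      · exfalso
        rw [gmap_of_nontop T' hs ht] at h
        have h1 : T' (i - 1) j = 0 := by omega
        -- (i,j) not top means i ≥ 1 and InSkew l m (i-1, j), so (i-1,j) is in D
        have hi : i ≠ 0 := by
          intro e; subst e
          exact ht ⟨hs, fun i' hi' => by omega⟩
        obtain ⟨i', rfl⟩ : ∃ i', i = i' + 1 := ⟨i - 1, by omega⟩
        have hprev : InSkew l m (i', j) := (nontop_iff hl hm hs).1 ht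
        have hD : InSkew (fun i => l (i + 1)) m (i', j) := by
          rw [inD_iff hl hm]; exact ⟨hprev, hs⟩
        have := (hT'.support (i', j)).2 hD
        simp only [Nat.add_sub_cancel] at h1
        exact this h1
    · rw [gmap_of_not T' hs] at h; omega
  · intro h; exact gmap_of_top T' h

lemma gmap_support (hl : ∀ ⦃i j : ℕ⦄, i ≤ j → l j ≤ l i)
    (hm : ∀ ⦃i j : ℕ⦄, i ≤ j → m j ≤ m i)
    (T' : ℕ → ℕ → ℕ) (p : ℕ × ℕ) :
    gmap l m T' p.1 p.2 ≠ 0 ↔ InSkew l m p := by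
  constructor
  · intro h
    by_contra hs
    rw [show p = (p.1, p.2) from rfl] at hs
    exact h (gmap_of_not T' hs)
  · intro hs
    by_cases ht : IsTopBox l m p.1 p.2
    · rw [gmap_of_top T' ht]; omega
    · rw [gmap_of_nontop T' hs ht]; omega

/-- The set of LR tableaux of a given shape and eventually-zero content is finite. -/
lemma finLR (hl : IsPartition l) {n : ℕ → ℕ} (hn : ∃ N, ∀ k, N ≤ k → n k = 0) :
    Finite {T : ℕ → ℕ → ℕ // IsLR l m n T} := by
  obtain ⟨N, hN⟩ := hn
  obtain ⟨R, hR⟩ := hl.2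
  -- every entry is at most N
  have hbound : ∀ (T : ℕ → ℕ → ℕ), IsLR l m n T → ∀ i j, T i j ≤ N := by
    intro T hT i j
    by_contra hc
    push_neg at hc
    obtain ⟨k, hk⟩ : ∃ k, T i j = k + 1 := ⟨T i j - 1, by omega⟩
    have hkN : N ≤ k := by omega
    have hfin : Finite {p : ℕ × ℕ // T p.1 p.2 = k + 1} := by
      have hss : {p : ℕ × ℕ | T p.1 p.2 = k + 1}.Finite :=
        (finShape hl).subset (fun p hp => (hT.support p).1 (by
          have : T p.1 p.2 = k + 1 := hp
          omega))
      exact hss.to_subtype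
    have hne : Nonempty {p : ℕ × ℕ // T p.1 p.2 = k + 1} :=
      Nonempty.intro ⟨(i, j), hk⟩
    have := hT.content k
    rw [hN k hkN] at this
    have := Nat.card_pos (α := {p : ℕ × ℕ // T p.1 p.2 = k + 1})
    omega
  -- injection into a finite type
  have hinj : Function.Injective
      (fun (T : {T : ℕ → ℕ → ℕ // IsLR l m n T}) =>
        (fun q : Fin R × Fin (l 0) => T.1 q.1 q.2 : Fin R × Fin (l 0) → ℕ)) := by
    intro T₁ T₂ h
    have key : ∀ i j, T₁.1 i j = T₂.1 i j := by
      intro i j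
      by_cases hij : i < R ∧ j < l 0
      · exact congrFun h (⟨i, hij.1⟩, ⟨j, hij.2⟩)
      · -- outside the bounding rectangle both are zero
        have hz : ∀ (T : ℕ → ℕ → ℕ), IsLR l m n T → T i j = 0 := by
          intro T hT
          by_contra hz
          have hs := (hT.support (i, j)).1 hz
          have h1 : j < l i := hs.2
          have h2 : l i ≤ l 0 := hl.1 (Nat.zero_le i)
          have h3 : i < R := by
            by_contra hcc
            rw [hR i (by omega)] at h1; omega
          exact hij ⟨h3, by omega⟩
        rw [hz T₁.1 T₁.2, hz T₂.1 T₂.2]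
    exact Subtype.ext (funext fun i => funext fun j => key i j)
  -- the image lands in functions bounded by N
  have : Function.Injective
      (fun (T : {T : ℕ → ℕ → ℕ // IsLR l m n T}) =>
        (fun q : Fin R × Fin (l 0) => (⟨T.1 q.1 q.2, by
          have := hbound T.1 T.2 q.1 q.2; omega⟩ : Fin (N + 1)))) := by
    intro T₁ T₂ h
    apply hinj
    funext q
    exact congrArg Fin.val (congrFun h q)
  exact Finite.of_injective _ this

end Aux2
section Aux3
open scoped Classical

variable {l m : ℕ → ℕ}

lemma find_topbox {b : ℕ} (hex : ∃ i, InSkew l m (i, b)) :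
    IsTopBox l m (Nat.find hex) b :=
  ⟨Nat.find_spec hex, fun i' hi' => Nat.find_min hex hi'⟩

lemma fwd_isLR (hl : IsPartition l) (hm : IsPartition m)
    {J : ℕ} {η : ℕ → ℕ} {T : ℕ → ℕ → ℕ}
    (hT : IsLR l m (fun i => if i = 0 then J else η (i - 1)) T)
    (htop : ∀ i j, IsTopBox l m i j → T i j = 1) :
    IsLR (fun i => l (i + 1)) m η (fun i j => T (i + 1) j - 1) := by
  have row0 : ∀ j, T 0 j ≤ 1 := by
    intro j
    by_cases h : T 0 j = 0
    · omega
    · have hs : InSkew l m (0, j) := (hT.support (0, j)).1 h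
      rw [htop 0 j ⟨hs, fun i' hi' => by omega⟩]
  have key : ∀ i j, 2 ≤ T (i + 1) j ↔ InSkew (fun i => l (i + 1)) m (i, j) := by
    intro i j
    rw [inD_iff hl.1 hm.1]
    constructor
    · intro h
      have hs : InSkew l m (i + 1, j) := (hT.support (i + 1, j)).1 (by show T (i + 1) j ≠ 0; omega)
      have hnt : ¬ IsTopBox l m (i + 1) j := fun ht => by
        have := htop _ _ ht; omega
      exact ⟨(nontop_iff hl.1 hm.1 hs).1 hnt, hs⟩
    · rintro ⟨h1, h2⟩
      have ha : T i j ≠ 0 := (hT.support (i, j)).2 h1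
      have := hT.col_strict i j h1 h2
      omega
  constructor
  · rintro ⟨a, b⟩
    show T (a + 1) b - 1 ≠ 0 ↔ _
    rw [← key a b]
    omega
  · intro i j h1 h2
    rw [inD_iff hl.1 hm.1] at h1 h2
    exact Nat.sub_le_sub_right (hT.row_weak (i + 1) j h1.2 h2.2) 1
  · intro i j h1 h2
    rw [inD_iff hl.1 hm.1] at h1 h2
    have hc := hT.col_strict (i + 1) j h1.2 h2.2
    have ha : T (i + 1) j ≠ 0 := (hT.support (i + 1, j)).2 h1.2
    show T (i + 1) j - 1 < T (i + 1 + 1) j - 1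
    omega
  · intro k
    have e := shiftEquiv (fun p => T (p.1 + 1) p.2 - 1 = k + 1)
      (fun p => T p.1 p.2 = k + 2)
      (fun a b => by show T (a + 1) b - 1 = k + 1 ↔ T (a + 1) b = k + 2; omega)
      (fun b => by show ¬ T 0 b = k + 2; have := row0 b; omega)
    have h2 := hT.content (k + 1)
    simp only [Nat.add_sub_cancel, if_neg (Nat.succ_ne_zero k)] at h2
    exact (Nat.card_congr e).trans h2
  · intro i j k
    have e1 := shiftEquiv
      (fun p => T (p.1 + 1) p.2 - 1 = k + 2 ∧ (p.1 < i ∨ (p.1 = i ∧ j ≤ p.2)))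
      (fun p => T p.1 p.2 = k + 3 ∧ (p.1 < i + 1 ∨ (p.1 = i + 1 ∧ j ≤ p.2)))
      (fun a b => by
        show (T (a + 1) b - 1 = k + 2 ∧ (a < i ∨ (a = i ∧ j ≤ b))) ↔
          (T (a + 1) b = k + 3 ∧ (a + 1 < i + 1 ∨ (a + 1 = i + 1 ∧ j ≤ b)))
        omega)
      (fun b => by
        show ¬ (T 0 b = k + 3 ∧ (0 < i + 1 ∨ (0 = i + 1 ∧ j ≤ b)))
        have := row0 b; omega)
    have e2 := shiftEquiv
      (fun p => T (p.1 + 1) p.2 - 1 = k + 1 ∧ (p.1 < i ∨ (p.1 = i ∧ j ≤ p.2)))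
      (fun p => T p.1 p.2 = k + 2 ∧ (p.1 < i + 1 ∨ (p.1 = i + 1 ∧ j ≤ p.2)))
      (fun a b => by
        show (T (a + 1) b - 1 = k + 1 ∧ (a < i ∨ (a = i ∧ j ≤ b))) ↔
          (T (a + 1) b = k + 2 ∧ (a + 1 < i + 1 ∨ (a + 1 = i + 1 ∧ j ≤ b)))
        omega)
      (fun b => by
        show ¬ (T 0 b = k + 2 ∧ (0 < i + 1 ∨ (0 = i + 1 ∧ j ≤ b)))
        have := row0 b; omega)
    exact le_trans (le_of_eq (Nat.card_congr e1))
      (le_trans (hT.lattice (i + 1) j (k + 1)) (le_of_eq (Nat.card_congr e2).symm))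

lemma gmap_col_strict (hl : IsPartition l) (hm : IsPartition m)
    {η : ℕ → ℕ} {T' : ℕ → ℕ → ℕ} (hT' : IsLR (fun i => l (i + 1)) m η T')
    (i j : ℕ) (h1 : InSkew l m (i, j)) (h2 : InSkew l m (i + 1, j)) :
    gmap l m T' i j < gmap l m T' (i + 1) j := by
  have nt2 : ¬ IsTopBox l m (i + 1) j := (nontop_iff hl.1 hm.1 h2).2 h1
  rw [gmap_of_nontop T' h2 nt2]
  simp only [Nat.add_sub_cancel]
  by_cases t1 : IsTopBox l m i j
  · rw [gmap_of_top T' t1]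
    have hD : InSkew (fun i => l (i + 1)) m (i, j) := (inD_iff hl.1 hm.1 i j).2 ⟨h1, h2⟩
    have : T' i j ≠ 0 := (hT'.support (i, j)).2 hD
    omega
  · have hi : i ≠ 0 := fun e => by subst e; exact t1 ⟨h1, fun i' hi' => by omega⟩
    obtain ⟨i', rfl⟩ : ∃ i', i = i' + 1 := ⟨i - 1, by omega⟩
    rw [gmap_of_nontop T' h1 t1]
    simp only [Nat.add_sub_cancel]
    have hprev : InSkew l m (i', j) := (nontop_iff hl.1 hm.1 h1).1 t1
    have d1 : InSkew (fun i => l (i + 1)) m (i', j) := (inD_iff hl.1 hm.1 i' j).2 ⟨hprev, h1⟩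
    have d2 : InSkew (fun i => l (i + 1)) m (i' + 1, j) := (inD_iff hl.1 hm.1 _ j).2 ⟨h1, h2⟩
    have := hT'.col_strict i' j d1 d2
    omega

lemma gmap_isLR (hl : IsPartition l) (hm : IsPartition m)
    {J : ℕ} (hJ : J = Nat.card {j : ℕ // ∃ i, InSkew l m (i, j)})
    {η : ℕ → ℕ} {T' : ℕ → ℕ → ℕ} (hT' : IsLR (fun i => l (i + 1)) m η T') :
    IsLR l m (fun i => if i = 0 then J else η (i - 1)) (gmap l m T') := by
  constructor
  · exact fun p => gmap_support hl.1 hm.1 T' p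
  · -- row_weak
    intro i j h1 h2
    by_cases t2 : IsTopBox l m i (j + 1)
    · rw [gmap_of_top T' t2]
      by_cases t1 : IsTopBox l m i j
      · rw [gmap_of_top T' t1]
      · exfalso
        have hi : i ≠ 0 := fun e => by subst e; exact t1 ⟨h1, fun i' hi' => by omega⟩
        obtain ⟨i', rfl⟩ : ∃ i', i = i' + 1 := ⟨i - 1, by omega⟩
        have hprev : InSkew l m (i', j) := (nontop_iff hl.1 hm.1 h1).1 t1
        have : InSkew l m (i', j + 1) :=
          ⟨by show m i' ≤ j + 1; have h' : m i' ≤ j := hprev.1; omega,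
           by show j + 1 < l i'; exact lt_of_lt_of_le h2.2 (hl.1 (Nat.le_succ i'))⟩
        exact t2.2 i' (by omega) this
    · rw [gmap_of_nontop T' h2 t2]
      by_cases t1 : IsTopBox l m i j
      · rw [gmap_of_top T' t1]; omega
      · rw [gmap_of_nontop T' h1 t1]
        have hi : i ≠ 0 := fun e => by subst e; exact t1 ⟨h1, fun i' hi' => by omega⟩
        obtain ⟨i', rfl⟩ : ∃ i', i = i' + 1 := ⟨i - 1, by omega⟩
        simp only [Nat.add_sub_cancel]
        have p1 : InSkew l m (i', j) := (nontop_iff hl.1 hm.1 h1).1 t1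
        have p2 : InSkew l m (i', j + 1) := (nontop_iff hl.1 hm.1 h2).1 t2
        have d1 : InSkew (fun i => l (i + 1)) m (i', j) := (inD_iff hl.1 hm.1 i' j).2 ⟨p1, h1⟩
        have d2 : InSkew (fun i => l (i + 1)) m (i', j + 1) :=
          (inD_iff hl.1 hm.1 i' (j + 1)).2 ⟨p2, h2⟩
        have := hT'.row_weak i' j d1 d2
        omega
  · exact fun i j h1 h2 => gmap_col_strict hl hm hT' i j h1 h2
  · -- content
    intro k
    cases k with
    | zero =>
      show Nat.card {p : ℕ × ℕ // gmap l m T' p.1 p.2 = 1} = if (0 : ℕ) = 0 then J else η (0 - 1)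
      rw [if_pos rfl, hJ]
      exact Nat.card_congr ((Equiv.subtypeEquivRight
        (fun p => by
          have := gmap_eq_one_iff hl.1 hm.1 hT' p.1 p.2
          exact this)).trans (topEquiv l m))
    | succ k =>
      show Nat.card {p : ℕ × ℕ // gmap l m T' p.1 p.2 = k + 2} =
        if (k + 1 : ℕ) = 0 then J else η (k + 1 - 1)
      rw [if_neg (Nat.succ_ne_zero k)]
      simp only [Nat.add_sub_cancel]
      have e := shiftEquiv (fun q => T' q.1 q.2 = k + 1)
        (fun p => gmap l m T' p.1 p.2 = k + 2)
        (fun a b => gmap_succ_iff hl.1 hm.1 hT' a b k)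
        (fun b => by show ¬ gmap l m T' 0 b = k + 2; have := gmap_row_zero (l := l) (m := m) T' b; omega)
      exact ((Nat.card_congr e).symm).trans (hT'.content k)
  · -- lattice
    intro i j k
    cases k with
    | zero =>
      classical
      haveI hfin : Finite {p : ℕ × ℕ //
          gmap l m T' p.1 p.2 = 1 ∧ (p.1 < i ∨ (p.1 = i ∧ j ≤ p.2))} := by
        have hss : {p : ℕ × ℕ |
            gmap l m T' p.1 p.2 = 1 ∧ (p.1 < i ∨ (p.1 = i ∧ j ≤ p.2))}.Finite :=
          (finShape hl).subset (fun p hp => (gmap_support hl.1 hm.1 T' p).1 (by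
            have h' : gmap l m T' p.1 p.2 = 1 := hp.1
            omega))
        exact hss.to_subtype
      let tr : ℕ → ℕ := fun b => if h : ∃ i', InSkew l m (i', b) then Nat.find h else 0
      have key : ∀ a b, gmap l m T' a b = 2 → IsTopBox l m (tr b) b ∧ tr b < a := by
        intro a b h2v
        have hs : InSkew l m (a, b) := (gmap_support hl.1 hm.1 T' (a, b)).1 (by
          show gmap l m T' a b ≠ 0; omega)
        have hex : ∃ i', InSkew l m (i', b) := ⟨a, hs⟩
        have hnt : ¬ IsTopBox l m a b := fun ht => by rw [gmap_of_top T' ht] at h2v; omega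
        have ha : a ≠ 0 := fun e => by subst e; exact hnt ⟨hs, fun i' hi' => by omega⟩
        obtain ⟨a', rfl⟩ : ∃ a', a = a' + 1 := ⟨a - 1, by omega⟩
        have hprev : InSkew l m (a', b) := (nontop_iff hl.1 hm.1 hs).1 hnt
        have h1 : tr b = Nat.find hex := by simp only [tr, dif_pos hex]
        have h2 := Nat.find_min' hex hprev
        exact ⟨by rw [h1]; exact find_topbox hex, by omega⟩
      have hmap : ∀ (p : {p : ℕ × ℕ //
          gmap l m T' p.1 p.2 = 2 ∧ (p.1 < i ∨ (p.1 = i ∧ j ≤ p.2))}),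
          gmap l m T' (tr p.1.2) p.1.2 = 1 ∧
            (tr p.1.2 < i ∨ (tr p.1.2 = i ∧ j ≤ p.1.2)) := by
        rintro ⟨⟨a, b⟩, hv, hpos⟩
        have hv' : gmap l m T' a b = 2 := hv
        have hpos' : a < i ∨ (a = i ∧ j ≤ b) := hpos
        obtain ⟨ht, hlt⟩ := key a b hv'
        show gmap l m T' (tr b) b = 1 ∧ (tr b < i ∨ (tr b = i ∧ j ≤ b))
        exact ⟨gmap_of_top T' ht, Or.inl (by omega)⟩
      refine Nat.card_le_card_of_injective
        (fun p => ⟨(tr p.1.2, p.1.2), (hmap p).1, (hmap p).2⟩) ?_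
      rintro ⟨⟨a₁, b₁⟩, h₁⟩ ⟨⟨a₂, b₂⟩, h₂⟩ heq
      have hb : b₁ = b₂ := congrArg (fun q => q.1.2) heq
      subst hb
      have hv₁ : gmap l m T' a₁ b₁ = 2 := h₁.1
      have hv₂ : gmap l m T' a₂ b₁ = 2 := h₂.1
      have hs₁ : InSkew l m (a₁, b₁) := (gmap_support hl.1 hm.1 T' (a₁, b₁)).1 (by
        show gmap l m T' a₁ b₁ ≠ 0; omega)
      have hs₂ : InSkew l m (a₂, b₁) := (gmap_support hl.1 hm.1 T' (a₂, b₁)).1 (by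
        show gmap l m T' a₂ b₁ ≠ 0; omega)
      have hcol : ∀ x y, InSkew l m (x, y) → InSkew l m (x + 1, y) →
          gmap l m T' x y < gmap l m T' (x + 1) y :=
        fun x y u v => gmap_col_strict hl hm hT' x y u v
      have haa : a₁ = a₂ := by
        rcases lt_trichotomy a₁ a₂ with h | h | h
        · have := col_chain hl.1 hm.1 hcol hs₁ a₂ h hs₂
          omega
        · exact h
        · have := col_chain hl.1 hm.1 hcol hs₂ a₁ h hs₁
          omega
      subst haa
      rfl
    | succ k =>
      rcases Nat.eq_zero_or_pos i with hi | hi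
      · subst hi
        have hemp : IsEmpty {p : ℕ × ℕ //
            gmap l m T' p.1 p.2 = k + 3 ∧ (p.1 < 0 ∨ (p.1 = 0 ∧ j ≤ p.2))} := by
          constructor
          rintro ⟨⟨a, b⟩, hv, hpos⟩
          have hpos' : a < 0 ∨ (a = 0 ∧ j ≤ b) := hpos
          have ha : a = 0 := by omega
          subst ha
          have h0 := gmap_row_zero (l := l) (m := m) T' b
          have hv' : gmap l m T' 0 b = k + 3 := hv
          omega
        rw [Nat.card_of_isEmpty]
        exact Nat.zero_le _
      · obtain ⟨i', rfl⟩ : ∃ i', i = i' + 1 := ⟨i - 1, by omega⟩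
        have e1 := shiftEquiv
          (fun q => T' q.1 q.2 = k + 2 ∧ (q.1 < i' ∨ (q.1 = i' ∧ j ≤ q.2)))
          (fun p => gmap l m T' p.1 p.2 = k + 3 ∧ (p.1 < i' + 1 ∨ (p.1 = i' + 1 ∧ j ≤ p.2)))
          (fun a b => by
            have h1 := gmap_succ_iff hl.1 hm.1 hT' a b (k + 1)
            show (T' a b = k + 2 ∧ (a < i' ∨ (a = i' ∧ j ≤ b))) ↔
              (gmap l m T' (a + 1) b = k + 3 ∧ (a + 1 < i' + 1 ∨ (a + 1 = i' + 1 ∧ j ≤ b)))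
            exact ⟨fun ⟨x, y⟩ => ⟨h1.1 x, by omega⟩, fun ⟨x, y⟩ => ⟨h1.2 x, by omega⟩⟩)
          (fun b => by
            show ¬ (gmap l m T' 0 b = k + 3 ∧ (0 < i' + 1 ∨ (0 = i' + 1 ∧ j ≤ b)))
            have h0 := gmap_row_zero (l := l) (m := m) T' b
            rintro ⟨x, _⟩; omega)
        have e2 := shiftEquiv
          (fun q => T' q.1 q.2 = k + 1 ∧ (q.1 < i' ∨ (q.1 = i' ∧ j ≤ q.2)))
          (fun p => gmap l m T' p.1 p.2 = k + 2 ∧ (p.1 < i' + 1 ∨ (p.1 = i' + 1 ∧ j ≤ p.2)))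
          (fun a b => by
            have h1 := gmap_succ_iff hl.1 hm.1 hT' a b k
            show (T' a b = k + 1 ∧ (a < i' ∨ (a = i' ∧ j ≤ b))) ↔
              (gmap l m T' (a + 1) b = k + 2 ∧ (a + 1 < i' + 1 ∨ (a + 1 = i' + 1 ∧ j ≤ b)))
            exact ⟨fun ⟨x, y⟩ => ⟨h1.1 x, by omega⟩, fun ⟨x, y⟩ => ⟨h1.2 x, by omega⟩⟩)
          (fun b => by
            show ¬ (gmap l m T' 0 b = k + 2 ∧ (0 < i' + 1 ∨ (0 = i' + 1 ∧ j ≤ b)))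
            have h0 := gmap_row_zero (l := l) (m := m) T' b
            rintro ⟨x, _⟩; omega)
        exact le_trans (le_of_eq (Nat.card_congr e1).symm)
          (le_trans (hT'.lattice i' j k) (le_of_eq (Nat.card_congr e2)))

end Aux3

/-- Removing the top box of every column of `l / m` yields (a translate of) the
skew diagram `(l ∘ (·+1)) / m`.  The map removing all `1`s and replacing each
entry `i ≥ 2` by `i - 1` is a bijection between LR tableaux of shape `l / m`
with entry `1` in the top box of every column (and content `(J, η)` where `J`
is the number of nonempty columns) and LR tableaux of the reduced shape with
content `η`.  Consequently, if some LR tableau of the reduced shape has content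
`η`, then `c(l; m, (J, η)) ≠ 0`. -/
theorem stmt3 (l m : ℕ → ℕ) (hl : IsPartition l) (hm : IsPartition m)
    (hml : ∀ i, m i ≤ l i)
    (J : ℕ) (hJ : J = Nat.card {j : ℕ // ∃ i, InSkew l m (i, j)}) :
    (∀ η : ℕ → ℕ, IsPartition η →
      Set.BijOn (fun (T : ℕ → ℕ → ℕ) => fun i j => T (i + 1) j - 1)
        {T | IsLR l m (fun i => if i = 0 then J else η (i - 1)) T ∧
             ∀ i j, IsTopBox l m i j → T i j = 1}
        {T | IsLR (fun i => l (i + 1)) m η T}) ∧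
    (∀ η : ℕ → ℕ, IsPartition η → LR (fun i => l (i + 1)) m η ≠ 0 →
      LR l m (fun i => if i = 0 then J else η (i - 1)) ≠ 0) := by
  constructor
  · intro η hη
    refine Set.InvOn.bijOn (f' := gmap l m) ⟨?_, ?_⟩ ?_ ?_
    · -- left inverse on s
      rintro T ⟨hT, htop⟩
      funext i j
      show gmap l m (fun i j => T (i + 1) j - 1) i j = T i j
      by_cases hs : InSkew l m (i, j)
      · by_cases ht : IsTopBox l m i j
        · rw [gmap_of_top _ ht, htop i j ht]
        · rw [gmap_of_nontop _ hs ht]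
          have hi : i ≠ 0 := fun e => by subst e; exact ht ⟨hs, fun i' hi' => by omega⟩
          obtain ⟨i', rfl⟩ : ∃ i', i = i' + 1 := ⟨i - 1, by omega⟩
          show T (i' + 1 - 1 + 1) j - 1 + 1 = T (i' + 1) j
          have hne : T (i' + 1) j ≠ 0 := (hT.support (i' + 1, j)).2 hs
          simp only [Nat.add_sub_cancel]
          omega
      · rw [gmap_of_not _ hs]
        have hz : T i j = 0 := by
          by_contra hne
          exact hs ((hT.support (i, j)).1 hne)
        omega
    · -- right inverse on t
      rintro T' hT'
      have hT' : IsLR (fun i => l (i + 1)) m η T' := hT'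
      funext i j
      show gmap l m T' (i + 1) j - 1 = T' i j
      by_cases hs : InSkew l m (i + 1, j)
      · by_cases ht : IsTopBox l m (i + 1) j
        · rw [gmap_of_top _ ht]
          have hz : T' i j = 0 := by
            by_contra hne
            have hD := (hT'.support (i, j)).1 hne
            rw [inD_iff hl.1 hm.1] at hD
            exact ht.2 i (by omega) hD.1
          omega
        · rw [gmap_of_nontop _ hs ht]
          simp only [Nat.add_sub_cancel]
      · rw [gmap_of_not _ hs]
        have hz : T' i j = 0 := by
          by_contra hne
          have hD := (hT'.support (i, j)).1 hne
          rw [inD_iff hl.1 hm.1] at hD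
          exact hs hD.2
        omega
    · rintro T ⟨hT, htop⟩
      exact fwd_isLR hl hm hT htop
    · intro T' hT'
      exact ⟨gmap_isLR hl hm hJ hT', fun i j ht => gmap_of_top T' ht⟩
  · intro η hη hne
    obtain ⟨⟨T', hT'⟩⟩ := (Nat.card_ne_zero.mp hne).1
    have hg : IsLR l m (fun i => if i = 0 then J else η (i - 1)) (gmap l m T') :=
      gmap_isLR hl hm hJ hT'
    have hfin : Finite {T : ℕ → ℕ → ℕ //
        IsLR l m (fun i => if i = 0 then J else η (i - 1)) T} := by
      obtain ⟨N, hN⟩ := hη.2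
      exact finLR hl ⟨N + 1, fun k hk => by
        have hk0 : k ≠ 0 := by omega
        simp only [if_neg hk0]
        exact hN (k - 1) (by omega)⟩
    exact Nat.card_ne_zero.mpr ⟨⟨⟨gmap l m T', hg⟩⟩, hfin⟩
end

section
/- For a skew diagram A = λ/μ, the i-th part of the base partition B([λ/μ]) (the componentwise minimum over all ν with c(λ; μ, ν) ≠ 0) equals max over j ≥ 1 of max(0, λ_{i+j−1} − μ_j). Equivalently, B_i is the largest row length of the skew diagram obtained from A by removing the top i−1 boxes of every column. -/
namespace Stmt5

def pre (a b : ℕ) (p : ℕ × ℕ) : Prop := p.1 < a ∨ (p.1 = a ∧ b ≤ p.2)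

def bb (R C : ℕ) : Finset (ℕ × ℕ) := Finset.range R ×ˢ Finset.range C

lemma mem_bb {R C : ℕ} {p : ℕ × ℕ} : p ∈ bb R C ↔ p.1 < R ∧ p.2 < C := by
  simp [bb]

lemma natCard_eq (T : ℕ → ℕ → ℕ) {R C : ℕ}
    (hsupp : ∀ p : ℕ × ℕ, T p.1 p.2 ≠ 0 → p.1 < R ∧ p.2 < C)
    {v : ℕ} (hv : 1 ≤ v) (Q : ℕ × ℕ → Prop) [DecidablePred Q] :
    Nat.card {p : ℕ × ℕ // T p.1 p.2 = v ∧ Q p}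
      = ((bb R C).filter (fun p => T p.1 p.2 = v ∧ Q p)).card := by
  have hset : {p : ℕ × ℕ | T p.1 p.2 = v ∧ Q p}
      = ↑((bb R C).filter (fun p => T p.1 p.2 = v ∧ Q p)) := by
    ext p
    simp only [Set.mem_setOf_eq, Finset.coe_filter, Finset.mem_coe, Set.mem_setOf_eq]
    constructor
    · rintro ⟨h1, h2⟩
      exact ⟨mem_bb.2 (hsupp p (by omega)), h1, h2⟩
    · rintro ⟨_, h⟩; exact h
  calc Nat.card {p : ℕ × ℕ // T p.1 p.2 = v ∧ Q p}
      = Nat.card {p : ℕ × ℕ | T p.1 p.2 = v ∧ Q p} := by rw [Set.coe_setOf]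
    _ = Set.ncard {p : ℕ × ℕ | T p.1 p.2 = v ∧ Q p} := Nat.card_coe_set_eq _
    _ = _ := by rw [hset, Set.ncard_coe_finset]

lemma natCard_eq' (T : ℕ → ℕ → ℕ) {R C : ℕ}
    (hsupp : ∀ p : ℕ × ℕ, T p.1 p.2 ≠ 0 → p.1 < R ∧ p.2 < C)
    {v : ℕ} (hv : 1 ≤ v) :
    Nat.card {p : ℕ × ℕ // T p.1 p.2 = v}
      = ((bb R C).filter (fun p => T p.1 p.2 = v)).card := by
  have hset : {p : ℕ × ℕ | T p.1 p.2 = v}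
      = ↑((bb R C).filter (fun p => T p.1 p.2 = v)) := by
    ext p
    simp only [Set.mem_setOf_eq, Finset.coe_filter, Finset.mem_coe, Set.mem_setOf_eq]
    constructor
    · intro h1
      exact ⟨mem_bb.2 (hsupp p (by omega)), h1⟩
    · rintro ⟨_, h⟩; exact h
  calc Nat.card {p : ℕ × ℕ // T p.1 p.2 = v}
      = Nat.card {p : ℕ × ℕ | T p.1 p.2 = v} := by rw [Set.coe_setOf]
    _ = Set.ncard {p : ℕ × ℕ | T p.1 p.2 = v} := Nat.card_coe_set_eq _
    _ = _ := by rw [hset, Set.ncard_coe_finset]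

/-- count of boxes of value `v` in the reading prefix at `(a,b)`. -/
noncomputable def cntF (T : ℕ → ℕ → ℕ) (R C : ℕ) (v a b : ℕ) : ℕ :=
  ((bb R C).filter (fun p => T p.1 p.2 = v ∧ (p.1 < a ∨ (p.1 = a ∧ b ≤ p.2)))).card

section Lower

variable {l m n : ℕ → ℕ} {T : ℕ → ℕ → ℕ} {R C : ℕ}

lemma lattice_cntF (hT : IsLR l m n T)
    (hsupp : ∀ p : ℕ × ℕ, T p.1 p.2 ≠ 0 → p.1 < R ∧ p.2 < C)
    (a b k : ℕ) : cntF T R C (k+2) a b ≤ cntF T R C (k+1) a b := by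
  have h := hT.lattice a b k
  rw [natCard_eq T hsupp (by omega) (fun p => (p.1 < a ∨ (p.1 = a ∧ b ≤ p.2))),
    natCard_eq T hsupp (by omega) (fun p => (p.1 < a ∨ (p.1 = a ∧ b ≤ p.2)))] at h
  exact h

lemma chain_cntF (hT : IsLR l m n T)
    (hsupp : ∀ p : ℕ × ℕ, T p.1 p.2 ≠ 0 → p.1 < R ∧ p.2 < C)
    (a b : ℕ) {u v : ℕ} (hu : 1 ≤ u) (huv : u ≤ v) :
    cntF T R C v a b ≤ cntF T R C u a b := by
  induction v with
  | zero => omega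
  | succ w ih =>
    rcases Nat.lt_or_ge u (w+1) with h | h
    · have h1 : u ≤ w := by omega
      have h2 : 1 ≤ w := by omega
      obtain ⟨w', rfl⟩ : ∃ w', w = w' + 1 := ⟨w - 1, by omega⟩
      exact le_trans (lattice_cntF hT hsupp a b w') (ih h1)
    · have : u = w + 1 := by omega
      subst this; exact le_refl _

/-- a box itself is in its own prefix. -/
lemma self_mem_cntF (hsupp : ∀ p : ℕ × ℕ, T p.1 p.2 ≠ 0 → p.1 < R ∧ p.2 < C)
    {p : ℕ × ℕ} {v : ℕ} (hv : 1 ≤ v) (hp : T p.1 p.2 = v) :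
    p ∈ (bb R C).filter (fun q => T q.1 q.2 = v ∧ (q.1 < p.1 ∨ (q.1 = p.1 ∧ p.2 ≤ q.2))) := by
  refine Finset.mem_filter.2 ⟨mem_bb.2 (hsupp p (by omega)), hp, Or.inr ⟨rfl, le_refl _⟩⟩

/-- later box in the same row (larger column reads earlier) has strictly smaller prefix-count
    provided the earlier box has the same value. -/
lemma rank_lt (hsupp : ∀ p : ℕ × ℕ, T p.1 p.2 ≠ 0 → p.1 < R ∧ p.2 < C)
    {r c c' v : ℕ} (hv : 1 ≤ v) (hcc : c < c') (hval : T r c = v) :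
    cntF T R C v r c' < cntF T R C v r c := by
  apply Finset.card_lt_card
  constructor
  · intro q hq
    rcases Finset.mem_filter.1 hq with ⟨hq1, hq2, hq3⟩
    refine Finset.mem_filter.2 ⟨hq1, hq2, ?_⟩
    rcases hq3 with h | ⟨h1, h2⟩
    · exact Or.inl h
    · exact Or.inr ⟨h1, by omega⟩
  · intro hsub
    have hmem := self_mem_cntF (T := T) hsupp hv (p := (r, c)) hval
    have := hsub hmem
    rcases Finset.mem_filter.1 this with ⟨_, _, h⟩
    rcases h with h | ⟨h1, h2⟩ <;> simp_all <;> omega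

/-- monotone rows: prefix at a strictly lower row is contained in prefix at higher row. -/
lemma rank_lt_row (hsupp : ∀ p : ℕ × ℕ, T p.1 p.2 ≠ 0 → p.1 < R ∧ p.2 < C)
    {r r' c c' v : ℕ} (hv : 1 ≤ v) (hr : r < r') (hval : T r' c' = v) :
    cntF T R C v r c < cntF T R C v r' c' := by
  apply Finset.card_lt_card
  constructor
  · intro q hq
    rcases Finset.mem_filter.1 hq with ⟨hq1, hq2, hq3⟩
    refine Finset.mem_filter.2 ⟨hq1, hq2, ?_⟩
    rcases hq3 with h | ⟨h1, h2⟩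
    · exact Or.inl (by omega)
    · exact Or.inl (by omega)
  · intro hsub
    have hmem := self_mem_cntF (T := T) hsupp hv (p := (r', c')) hval
    have := hsub hmem
    rcases Finset.mem_filter.1 this with ⟨_, _, h⟩
    rcases h with h | ⟨h1, h2⟩ <;> simp_all <;> omega

lemma row_mono (hT : IsLR l m n T) {r a : ℕ} (d : ℕ) :
    ∀ {a' : ℕ}, a' = a + d → InSkew l m (r, a) → InSkew l m (r, a') → T r a ≤ T r a' := by
  induction d with
  | zero => rintro a' rfl _ _; simp
  | succ e ih =>
    rintro a' rfl h1 h2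
    have u1 : m r ≤ a := h1.1
    have v2 : a + (e + 1) < l r := h2.2
    have hmid : InSkew l m (r, a + e) := ⟨show m r ≤ a + e by omega, show a + e < l r by omega⟩
    exact le_trans (ih rfl h1 hmid) (hT.row_weak r (a + e) hmid h2)

lemma col_chain (hl : IsPartition l) (hm : IsPartition m) (hT : IsLR l m n T)
    {i j c : ℕ} (hc1 : m j ≤ c) (hc2 : c < l (i + j)) :
    ∀ s, s ≤ i → s + 1 ≤ T (j + s) c := by
  have hin : ∀ s, s ≤ i → InSkew l m (j + s, c) := by
    intro s hs
    refine ⟨le_trans (hm.1 (by omega : j ≤ j + s)) hc1, ?_⟩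
    exact lt_of_lt_of_le hc2 (hl.1 (by omega : j + s ≤ i + j))
  intro s
  induction s with
  | zero =>
    intro _
    have h0 := hin 0 (by omega)
    have h1 : T (j + 0) c ≠ 0 := by
      intro hz
      have : ¬ InSkew l m (j + 0, c) := by
        intro hcon
        exact ((hT.support (j + 0, c)).2 hcon) hz
      exact this h0
    omega
  | succ e ih =>
    intro hs
    have h1 := hin e (by omega)
    have h2 := hin (e + 1) (by omega)
    have hlt : T (j + e) c < T (j + (e + 1)) c := hT.col_strict (j + e) c h1 h2
    have := ih (by omega)
    omega

lemma lower_main (hl : IsPartition l) (hm : IsPartition m) (hT : IsLR l m n T)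
    {R : ℕ} (hR : ∀ j, R ≤ j → l j = 0) (i j : ℕ) :
    l (i + j) - m j ≤ n i := by
  set C := l 0 with hC
  have hsupp : ∀ p : ℕ × ℕ, T p.1 p.2 ≠ 0 → p.1 < R ∧ p.2 < C := by
    intro p hp
    have hin := (hT.support p).1 hp
    rcases hin with ⟨h1, h2⟩
    constructor
    · by_contra h; push_neg at h; rw [hR p.1 h] at h2; omega
    · exact lt_of_lt_of_le h2 (hl.1 (Nat.zero_le _))
  set SF := (bb R C).filter (fun p => T p.1 p.2 = i + 1) with hSF
  have hni : n i = SF.card := by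
    rw [← hT.content i, natCard_eq' T hsupp (by omega)]
  set N := SF.card with hN
  -- ranks are ≤ N
  have hcnt_le : ∀ a b, cntF T R C (i+1) a b ≤ N := by
    intro a b
    apply Finset.card_le_card
    intro q hq
    rcases Finset.mem_filter.1 hq with ⟨h1, h2, _⟩
    exact Finset.mem_filter.2 ⟨h1, h2⟩
  -- surjectivity of ranks
  have hsurj : ∀ k, 1 ≤ k → k ≤ N → ∃ q, q ∈ SF ∧ cntF T R C (i+1) q.1 q.2 = k := by
    intro k hk1 hk2
    set f : ℕ × ℕ → ℕ := fun q => cntF T R C (i+1) q.1 q.2 with hf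
    have hinj : Set.InjOn f SF := by
      intro q hq q' hq' hfe
      rcases Finset.mem_filter.1 hq with ⟨hq1, hq2⟩
      rcases Finset.mem_filter.1 hq' with ⟨hq'1, hq'2⟩
      by_contra hne
      rcases lt_trichotomy q.1 q'.1 with h | h | h
      · have := rank_lt_row (T := T) hsupp (r := q.1) (c := q.2) (v := i+1) (by omega) h hq'2
        simp only [hf] at hfe; omega
      · rcases lt_trichotomy q.2 q'.2 with h2 | h2 | h2
        · have := rank_lt (T := T) hsupp (v := i+1) (by omega) h2 hq2
          simp only [hf] at hfe; rw [← h] at hfe; omega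
        · exact hne (Prod.ext h h2)
        · have := rank_lt (T := T) hsupp (v := i+1) (by omega) h2 hq'2
          simp only [hf] at hfe; rw [h] at hfe; omega
      · have := rank_lt_row (T := T) hsupp (r := q'.1) (c := q'.2) (v := i+1) (by omega) h hq2
        simp only [hf] at hfe; omega
    have himg : SF.image f ⊆ Finset.Icc 1 N := by
      intro k' hk'
      rcases Finset.mem_image.1 hk' with ⟨q, hq, rfl⟩
      rcases Finset.mem_filter.1 hq with ⟨hq1, hq2⟩
      refine Finset.mem_Icc.2 ⟨?_, hcnt_le _ _⟩
      have := self_mem_cntF (T := T) hsupp (p := q) (v := i+1) (by omega) hq2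
      have hpos : 0 < f q := Finset.card_pos.2 ⟨q, this⟩
      omega
    have hcard : (SF.image f).card = N := by
      rw [Finset.card_image_of_injOn hinj]
    have : SF.image f = Finset.Icc 1 N := by
      apply Finset.eq_of_subset_of_card_le himg
      rw [hcard, Nat.card_Icc]; omega
    have hk : k ∈ SF.image f := by rw [this]; exact Finset.mem_Icc.2 ⟨hk1, hk2⟩
    rcases Finset.mem_image.1 hk with ⟨q, hq, hfq⟩
    exact ⟨q, hq, hfq⟩
  -- the row of boxes
  set P := Finset.Ico (m j) (l (i + j)) with hP
  have hcol : ∀ c ∈ P, i + 1 ≤ T (i + j) c := by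
    intro c hc
    rcases Finset.mem_Ico.1 hc with ⟨h1, h2⟩
    have := col_chain hl hm hT h1 h2 i (le_refl i)
    rwa [show j + i = i + j by omega] at this
  have hrnk : ∀ c ∈ P, 1 ≤ cntF T R C (T (i+j) c) (i+j) c ∧
      cntF T R C (T (i+j) c) (i+j) c ≤ N := by
    intro c hc
    constructor
    · have hv : 1 ≤ T (i+j) c := by have := hcol c hc; omega
      have := self_mem_cntF (T := T) hsupp (p := ((i+j), c)) hv rfl
      exact Finset.card_pos.2 ⟨_, this⟩
    · calc cntF T R C (T (i+j) c) (i+j) c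
          ≤ cntF T R C (i+1) (i+j) c := chain_cntF hT hsupp _ _ (by omega) (hcol c hc)
        _ ≤ N := hcnt_le _ _
  set g : ℕ → ℕ × ℕ := fun c =>
    if h : ∃ q, q ∈ SF ∧ cntF T R C (i+1) q.1 q.2 = cntF T R C (T (i+j) c) (i+j) c
    then h.choose else (0, 0) with hg
  have hgspec : ∀ c ∈ P, g c ∈ SF ∧
      cntF T R C (i+1) (g c).1 (g c).2 = cntF T R C (T (i+j) c) (i+j) c := by
    intro c hc
    have hex := hsurj _ (hrnk c hc).1 (hrnk c hc).2
    simp only [hg, dif_pos hex]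
    exact hex.choose_spec
  have hginj : Set.InjOn g P := by
    intro c hc c' hc' hge
    by_contra hne
    have key : ∀ a b : ℕ, a ∈ P → b ∈ P → a < b →
        cntF T R C (T (i+j) b) (i+j) b < cntF T R C (T (i+j) a) (i+j) a := by
      intro a b ha hb hab
      rcases Finset.mem_Ico.1 ha with ⟨ha1, ha2⟩
      rcases Finset.mem_Ico.1 hb with ⟨hb1, hb2⟩
      have hIa : InSkew l m (i+j, a) := ⟨le_trans (hm.1 (by omega : j ≤ i + j)) ha1, ha2⟩
      have hIb : InSkew l m (i+j, b) := ⟨le_trans (hm.1 (by omega : j ≤ i + j)) hb1, hb2⟩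
      have htt : T (i+j) a ≤ T (i+j) b := row_mono hT (b - a) (by omega) hIa hIb
      calc cntF T R C (T (i+j) b) (i+j) b
          ≤ cntF T R C (T (i+j) a) (i+j) b :=
            chain_cntF hT hsupp _ _ (by have := hcol a ha; omega) htt
        _ < cntF T R C (T (i+j) a) (i+j) a :=
            rank_lt (T := T) hsupp (by have := hcol a ha; omega) hab rfl
    rcases lt_trichotomy c c' with h | h | h
    · have := key c c' hc hc' h
      have e1 := (hgspec c hc).2
      have e2 := (hgspec c' hc').2
      rw [hge] at e1; omega
    · exact hne h
    · have := key c' c hc' hc h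
      have e1 := (hgspec c hc).2
      have e2 := (hgspec c' hc').2
      rw [hge] at e1; omega
  have hle : P.card ≤ SF.card :=
    Finset.card_le_card_of_injOn g (fun c hc => (hgspec c hc).1) hginj
  rw [hP] at hle
  rw [Nat.card_Ico] at hle
  omega

end Lower

/-! ### Construction of a minimal tableau -/

section Constr

def wRow (l m : ℕ → ℕ) (i j : ℕ) : ℕ := if j < i then 0 else l j - m (j - i)

def NX (l m : ℕ → ℕ) (i r X : ℕ) : ℕ :=
  ((Finset.range r).filter (fun j => X ≤ wRow l m i j)).card

def dpt (m : ℕ → ℕ) (r c : ℕ) : ℕ :=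
  ((Finset.range (r + 1)).filter (fun s => m s ≤ c)).card

def TT (l m : ℕ → ℕ) (i r c : ℕ) : ℕ :=
  if m r ≤ c ∧ c < l r then
    (if i ≤ r ∧ m (r - i) ≤ c then i + 1 + NX l m i r (l r - c) else dpt m r c)
  else 0

def sAF (l m : ℕ → ℕ) (i u I : ℕ) : ℕ :=
  ((Finset.Icc 1 (l 0)).filter (fun X => u ≤ NX l m i I X)).card

variable {l m : ℕ → ℕ} {i : ℕ}

lemma wRow_le (j : ℕ) : wRow l m i j ≤ l j := by
  unfold wRow; split <;> omega

lemma NX_le (r X : ℕ) : NX l m i r X ≤ r := by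
  calc NX l m i r X ≤ (Finset.range r).card := Finset.card_filter_le _ _
    _ = r := Finset.card_range r

lemma NX_anti (r : ℕ) {X Y : ℕ} (h : X ≤ Y) : NX l m i r Y ≤ NX l m i r X := by
  apply Finset.card_le_card
  intro j hj
  rcases Finset.mem_filter.1 hj with ⟨h1, h2⟩
  exact Finset.mem_filter.2 ⟨h1, by omega⟩

lemma NX_succ (I X : ℕ) :
    NX l m i (I + 1) X = NX l m i I X + if X ≤ wRow l m i I then 1 else 0 := by
  unfold NX
  rw [Finset.range_add_one, Finset.filter_insert]
  split
  · rw [Finset.card_insert_of_notMem (by simp)]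
  · simp

lemma dpt_pos {r c : ℕ} (h : m r ≤ c) : 1 ≤ dpt m r c := by
  have : r ∈ (Finset.range (r + 1)).filter (fun s => m s ≤ c) :=
    Finset.mem_filter.2 ⟨Finset.mem_range.2 (by omega), h⟩
  exact Finset.card_pos.2 ⟨r, this⟩

lemma dpt_mono {r c c' : ℕ} (h : c ≤ c') : dpt m r c ≤ dpt m r c' := by
  apply Finset.card_le_card
  intro j hj
  rcases Finset.mem_filter.1 hj with ⟨h1, h2⟩
  exact Finset.mem_filter.2 ⟨h1, by omega⟩

lemma dpt_succ {r c : ℕ} (h : m (r + 1) ≤ c) : dpt m (r + 1) c = dpt m r c + 1 := by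
  unfold dpt
  rw [show r + 1 + 1 = (r + 1) + 1 from rfl, Finset.range_add_one, Finset.filter_insert, if_pos h,
    Finset.card_insert_of_notMem (by simp)]

lemma dpt_le_strip (hm : IsPartition m) {r c : ℕ}
    (h : ¬ (i ≤ r ∧ m (r - i) ≤ c)) : dpt m r c ≤ i := by
  rcases Nat.lt_or_ge r i with hr | hr
  · calc dpt m r c ≤ (Finset.range (r + 1)).card := Finset.card_filter_le _ _
      _ = r + 1 := Finset.card_range _
      _ ≤ i := by omega
  · have hc : ¬ m (r - i) ≤ c := by tauto
    have hsub : (Finset.range (r + 1)).filter (fun s => m s ≤ c) ⊆ Finset.Ioc (r - i) r := by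
      intro s hs
      rcases Finset.mem_filter.1 hs with ⟨h1, h2⟩
      have h1' := Finset.mem_range.1 h1
      refine Finset.mem_Ioc.2 ⟨?_, by omega⟩
      by_contra hle
      push_neg at hle
      exact hc (le_trans (hm.1 hle) h2)
    calc dpt m r c ≤ (Finset.Ioc (r - i) r).card := Finset.card_le_card hsub
      _ = r - (r - i) := Nat.card_Ioc _ _
      _ ≤ i := by omega

lemma dpt_ge_inner (hm : IsPartition m) {r c : ℕ}
    (h1 : i ≤ r) (h2 : m (r - i) ≤ c) : i + 1 ≤ dpt m r c := by
  have hsub : Finset.Icc (r - i) r ⊆ (Finset.range (r + 1)).filter (fun s => m s ≤ c) := by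
    intro s hs
    rcases Finset.mem_Icc.1 hs with ⟨hs1, hs2⟩
    exact Finset.mem_filter.2 ⟨Finset.mem_range.2 (by omega), le_trans (hm.1 hs1) h2⟩
  calc i + 1 = (Finset.Icc (r - i) r).card := by rw [Nat.card_Icc]; omega
    _ ≤ _ := Finset.card_le_card hsub

lemma TT_support (p : ℕ × ℕ) : TT l m i p.1 p.2 ≠ 0 ↔ InSkew l m p := by
  obtain ⟨r, c⟩ := p
  dsimp only
  unfold TT
  constructor
  · intro h
    by_contra hin
    have : ¬ (m r ≤ c ∧ c < l r) := hin
    rw [if_neg this] at h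
    exact h rfl
  · intro hin
    have hin' : m r ≤ c ∧ c < l r := hin
    rw [if_pos hin']
    split
    · omega
    · have := dpt_pos (m := m) (r := r) (c := c) hin'.1
      omega

lemma TT_inner {r c : ℕ} (hin : m r ≤ c ∧ c < l r) (h1 : i ≤ r) (h2 : m (r - i) ≤ c) :
    TT l m i r c = i + 1 + NX l m i r (l r - c) := by
  unfold TT; rw [if_pos hin, if_pos ⟨h1, h2⟩]

lemma TT_strip {r c : ℕ} (hin : m r ≤ c ∧ c < l r) (h : ¬ (i ≤ r ∧ m (r - i) ≤ c)) :
    TT l m i r c = dpt m r c := by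
  unfold TT; rw [if_pos hin, if_neg h]

lemma TT_zero {r c : ℕ} (h : ¬ (m r ≤ c ∧ c < l r)) : TT l m i r c = 0 := by
  unfold TT; rw [if_neg h]

/-- characterization of values `≥ i+1`. -/
lemma TT_eq_inner_iff (hm : IsPartition m) {r c v : ℕ} (hv : i + 1 ≤ v) :
    TT l m i r c = v ↔ (i ≤ r ∧ m (r - i) ≤ c ∧ c < l r ∧ NX l m i r (l r - c) = v - i - 1) := by
  constructor
  · intro h
    by_cases hin : m r ≤ c ∧ c < l r
    · by_cases hinner : i ≤ r ∧ m (r - i) ≤ c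
      · rw [TT_inner hin hinner.1 hinner.2] at h
        exact ⟨hinner.1, hinner.2, hin.2, by omega⟩
      · rw [TT_strip hin hinner] at h
        have := dpt_le_strip hm hinner
        omega
    · rw [TT_zero hin] at h; omega
  · rintro ⟨h1, h2, h3, h4⟩
    have hin : m r ≤ c ∧ c < l r := ⟨le_trans (hm.1 (by omega : r - i ≤ r)) h2, h3⟩
    rw [TT_inner hin h1 h2]
    have := NX_le (l := l) (m := m) (i := i) r (l r - c)
    omega

lemma TT_row_weak (hl : IsPartition l) (hm : IsPartition m) {r c : ℕ}
    (h1 : InSkew l m (r, c)) (h2 : InSkew l m (r, c + 1)) :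
    TT l m i r c ≤ TT l m i r (c + 1) := by
  have hin1 : m r ≤ c ∧ c < l r := h1
  have hin2 : m r ≤ c + 1 ∧ c + 1 < l r := h2
  by_cases hA : i ≤ r ∧ m (r - i) ≤ c
  · have hB : i ≤ r ∧ m (r - i) ≤ c + 1 := ⟨hA.1, by omega⟩
    rw [TT_inner hin1 hA.1 hA.2, TT_inner hin2 hB.1 hB.2]
    have := NX_anti (l := l) (m := m) (i := i) r (show l r - (c+1) ≤ l r - c by omega)
    omega
  · rw [TT_strip hin1 hA]
    by_cases hB : i ≤ r ∧ m (r - i) ≤ c + 1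
    · rw [TT_inner hin2 hB.1 hB.2]
      have := dpt_le_strip (i := i) hm hA
      omega
    · rw [TT_strip hin2 hB]
      exact dpt_mono (by omega)

lemma TT_col_strict (hl : IsPartition l) (hm : IsPartition m) {r c : ℕ}
    (h1 : InSkew l m (r, c)) (h2 : InSkew l m (r + 1, c)) :
    TT l m i r c < TT l m i (r + 1) c := by
  have hin1 : m r ≤ c ∧ c < l r := h1
  have hin2 : m (r + 1) ≤ c ∧ c < l (r + 1) := h2
  by_cases hA : i ≤ r ∧ m (r - i) ≤ c
  · have hB : i ≤ r + 1 ∧ m (r + 1 - i) ≤ c :=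
      ⟨by omega, le_trans (hm.1 (by omega : r - i ≤ r + 1 - i)) hA.2⟩
    rw [TT_inner hin1 hA.1 hA.2, TT_inner hin2 hB.1 hB.2]
    have hw : l (r + 1) - c ≤ wRow l m i r := by
      unfold wRow
      rw [if_neg (by omega : ¬ r < i)]
      have := hl.1 (by omega : r ≤ r + 1)
      have := hA.2
      omega
    have hNX := NX_succ (l := l) (m := m) (i := i) r (l (r + 1) - c)
    rw [if_pos hw] at hNX
    have := NX_anti (l := l) (m := m) (i := i) r
      (show l (r + 1) - c ≤ l r - c by have := hl.1 (by omega : r ≤ r + 1); omega)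
    omega
  · rw [TT_strip hin1 hA]
    by_cases hB : i ≤ r + 1 ∧ m (r + 1 - i) ≤ c
    · rw [TT_inner hin2 hB.1 hB.2]
      have := dpt_le_strip (i := i) hm hA
      omega
    · rw [TT_strip hin2 hB, dpt_succ hin2.1]
      omega

/-- every box of value `v` with `2 ≤ v ≤ i+1` has a box of value `v-1` directly above it. -/
lemma TT_above (hl : IsPartition l) (hm : IsPartition m) {r c v : ℕ}
    (hv2 : 2 ≤ v) (hvi : v ≤ i + 1) (hval : TT l m i r c = v) :
    1 ≤ r ∧ TT l m i (r - 1) c = v - 1 := by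
  have hne : TT l m i r c ≠ 0 := by omega
  have hin : m r ≤ c ∧ c < l r := (TT_support (l := l) (m := m) (i := i) (r, c)).1 hne
  rcases Nat.lt_or_ge v (i + 1) with hcase | hcase
  · -- strip case : v ≤ i
    have hstrip : ¬ (i ≤ r ∧ m (r - i) ≤ c) := by
      intro hA
      rw [TT_inner hin hA.1 hA.2] at hval
      omega
    rw [TT_strip hin hstrip] at hval
    have hr1 : 1 ≤ r := by
      by_contra hr0
      have : r = 0 := by omega
      subst this
      have : dpt m 0 c ≤ 1 := by
        calc dpt m 0 c ≤ (Finset.range 1).card := Finset.card_filter_le _ _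
          _ = 1 := Finset.card_range 1
      omega
    obtain ⟨r', rfl⟩ : ∃ r', r = r' + 1 := ⟨r - 1, by omega⟩
    have hm1 : m r' ≤ c := by
      by_contra hmc
      push_neg at hmc
      have hsub : (Finset.range (r' + 1 + 1)).filter (fun s => m s ≤ c) ⊆ {r' + 1} := by
        intro s hs
        rcases Finset.mem_filter.1 hs with ⟨hs1, hs2⟩
        have hs1' := Finset.mem_range.1 hs1
        rcases Nat.lt_or_ge s (r' + 1) with h | h
        · exact absurd (le_trans (hm.1 (by omega : s ≤ r')) hs2) (by omega)
        · simp only [Finset.mem_singleton]; omega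
      have : dpt m (r' + 1) c ≤ 1 := by
        calc dpt m (r' + 1) c ≤ ({r' + 1} : Finset ℕ).card := Finset.card_le_card hsub
          _ = 1 := rfl
      omega
    have hin' : m r' ≤ c ∧ c < l r' := ⟨hm1, lt_of_lt_of_le hin.2 (hl.1 (by omega : r' ≤ r' + 1))⟩
    have hstrip' : ¬ (i ≤ r' ∧ m (r' - i) ≤ c) := by
      intro hA
      exact hstrip ⟨by omega, le_trans (hm.1 (by omega : r' - i ≤ r' + 1 - i)) hA.2⟩
    have hds := dpt_succ (m := m) (r := r') (c := c) hin.1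
    refine ⟨by omega, ?_⟩
    rw [show r' + 1 - 1 = r' by omega, TT_strip hin' hstrip']
    omega
  · -- v = i + 1
    have hv : v = i + 1 := by omega
    have hchar := (TT_eq_inner_iff (l := l) hm (le_of_eq hv.symm)).1 hval
    rcases hchar with ⟨hir, hmc, hcl, hnx⟩
    have hi1 : 1 ≤ i := by omega
    have hr1 : 1 ≤ r := by omega
    obtain ⟨r', rfl⟩ : ∃ r', r = r' + 1 := ⟨r - 1, by omega⟩
    have hm1 : m r' ≤ c := le_trans (hm.1 (by omega : r' + 1 - i ≤ r')) hmc
    have hin' : InSkew l m (r', c) :=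
      ⟨hm1, lt_of_lt_of_le hin.2 (hl.1 (by omega : r' ≤ r' + 1))⟩
    have hstrip' : ¬ (i ≤ r' ∧ m (r' - i) ≤ c) := by
      intro hA
      have hlt := TT_col_strict (i := i) hl hm hin' (show InSkew l m (r' + 1, c) from hin)
      rw [TT_inner (show m r' ≤ c ∧ c < l r' from hin') hA.1 hA.2] at hlt
      omega
    refine ⟨by omega, ?_⟩
    rw [show r' + 1 - 1 = r' by omega,
      TT_strip (show m r' ≤ c ∧ c < l r' from hin') hstrip']
    have hge := dpt_ge_inner (i := i) hm hir hmc
    have hle := dpt_le_strip (i := i) hm hstrip'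
    have hds := dpt_succ (m := m) (r := r') (c := c) hin.1
    omega

/-- a downward-closed subset of `[1, M]` is an initial interval. -/
lemma downward_eq_Icc {M : ℕ} {s : Finset ℕ} (hs : s ⊆ Finset.Icc 1 M)
    (hdc : ∀ x ∈ s, ∀ y, 1 ≤ y → y ≤ x → y ∈ s) : s = Finset.Icc 1 s.card := by
  ext x
  simp only [Finset.mem_Icc]
  constructor
  · intro hx
    have h1 : 1 ≤ x := (Finset.mem_Icc.1 (hs hx)).1
    have hsub : Finset.Icc 1 x ⊆ s := by
      intro y hy
      rcases Finset.mem_Icc.1 hy with ⟨hy1, hy2⟩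
      exact hdc x hx y hy1 hy2
    have := Finset.card_le_card hsub
    rw [Nat.card_Icc] at this
    exact ⟨h1, by omega⟩
  · rintro ⟨h1, h2⟩
    by_contra hx
    have hsub : s ⊆ Finset.Icc 1 (x - 1) := by
      intro z hz
      have hz1 := (Finset.mem_Icc.1 (hs hz)).1
      refine Finset.mem_Icc.2 ⟨hz1, ?_⟩
      by_contra hzx
      push_neg at hzx
      exact hx (hdc z hz x h1 (by omega))
    have := Finset.card_le_card hsub
    rw [Nat.card_Icc] at this
    omega

lemma NXmem (u I : ℕ) {X : ℕ} (hX1 : 1 ≤ X) (hX2 : X ≤ l 0) :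
    u ≤ NX l m i I X ↔ X ≤ sAF l m i u I := by
  have key : (Finset.Icc 1 (l 0)).filter (fun Y => u ≤ NX l m i I Y)
      = Finset.Icc 1 (sAF l m i u I) := by
    apply downward_eq_Icc (Finset.filter_subset _ _)
    intro x hx y hy1 hy2
    rcases Finset.mem_filter.1 hx with ⟨hx1, hx2⟩
    rcases Finset.mem_Icc.1 hx1 with ⟨_, hxM⟩
    refine Finset.mem_filter.2 ⟨Finset.mem_Icc.2 ⟨hy1, by omega⟩, ?_⟩
    exact le_trans hx2 (NX_anti I hy2)
  constructor
  · intro h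
    have : X ∈ (Finset.Icc 1 (l 0)).filter (fun Y => u ≤ NX l m i I Y) :=
      Finset.mem_filter.2 ⟨Finset.mem_Icc.2 ⟨hX1, hX2⟩, h⟩
    rw [key] at this
    exact (Finset.mem_Icc.1 this).2
  · intro h
    have : X ∈ Finset.Icc 1 (sAF l m i u I) := Finset.mem_Icc.2 ⟨hX1, h⟩
    rw [← key] at this
    exact (Finset.mem_filter.1 this).2

lemma sAF_le (u I : ℕ) : sAF l m i u I ≤ l 0 := by
  calc sAF l m i u I ≤ (Finset.Icc 1 (l 0)).card := Finset.card_filter_le _ _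
    _ = l 0 := by rw [Nat.card_Icc]; omega

lemma sAF_zero (I : ℕ) : sAF l m i 0 I = l 0 := by
  unfold sAF
  rw [Finset.filter_true_of_mem (fun x _ => Nat.zero_le _), Nat.card_Icc]; omega

lemma sAF_anti {u u' : ℕ} (h : u ≤ u') (I : ℕ) : sAF l m i u' I ≤ sAF l m i u I := by
  apply Finset.card_le_card
  intro X hX
  rcases Finset.mem_filter.1 hX with ⟨h1, h2⟩
  exact Finset.mem_filter.2 ⟨h1, by omega⟩

lemma Kcount {K : ℕ} (hK : K ≤ l 0) {u : ℕ} (hu : 1 ≤ u) (I : ℕ) :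
    ((Finset.Icc 1 K).filter (fun X => NX l m i I X = u - 1)).card
      = min K (sAF l m i (u - 1) I) - min K (sAF l m i u I) := by
  have hA : ∀ w, (Finset.Icc 1 K).filter (fun X => w ≤ NX l m i I X)
      = Finset.Icc 1 (min K (sAF l m i w I)) := by
    intro w
    ext X
    simp only [Finset.mem_filter, Finset.mem_Icc]
    constructor
    · rintro ⟨⟨h1, h2⟩, h3⟩
      have := (NXmem (l := l) (m := m) (i := i) w I h1 (by omega)).1 h3
      exact ⟨h1, by omega⟩
    · rintro ⟨h1, h2⟩
      refine ⟨⟨h1, by omega⟩, ?_⟩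
      exact (NXmem (l := l) (m := m) (i := i) w I h1 (by omega)).2 (by omega)
  have hsub : (Finset.Icc 1 K).filter (fun X => u ≤ NX l m i I X)
      ⊆ (Finset.Icc 1 K).filter (fun X => u - 1 ≤ NX l m i I X) := by
    intro X hX
    rcases Finset.mem_filter.1 hX with ⟨h1, h2⟩
    exact Finset.mem_filter.2 ⟨h1, by omega⟩
  have he : (Finset.Icc 1 K).filter (fun X => NX l m i I X = u - 1)
      = (Finset.Icc 1 K).filter (fun X => u - 1 ≤ NX l m i I X)
        \ (Finset.Icc 1 K).filter (fun X => u ≤ NX l m i I X) := by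
    ext X
    simp only [Finset.mem_filter, Finset.mem_sdiff, Finset.mem_Icc]
    constructor
    · rintro ⟨h1, h2⟩
      exact ⟨⟨h1, by omega⟩, by rintro ⟨_, h3⟩; omega⟩
    · rintro ⟨⟨h1, h2⟩, h3⟩
      refine ⟨h1, ?_⟩
      by_contra hne
      exact h3 ⟨h1, by omega⟩
  rw [he, Finset.card_sdiff_of_subset hsub, hA, hA, Nat.card_Icc, Nat.card_Icc]
  omega

lemma sAF_succ (hl : IsPartition l) {u : ℕ} (hu : 1 ≤ u) (I : ℕ) :
    sAF l m i u (I + 1)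
      = sAF l m i u I + ((Finset.Icc 1 (wRow l m i I)).filter
          (fun X => NX l m i I X = u - 1)).card := by
  have hwl : wRow l m i I ≤ l 0 := le_trans (wRow_le I) (hl.1 (Nat.zero_le I))
  have hsplit : (Finset.Icc 1 (l 0)).filter (fun X => u ≤ NX l m i (I + 1) X)
      = (Finset.Icc 1 (l 0)).filter (fun X => u ≤ NX l m i I X)
        ∪ (Finset.Icc 1 (l 0)).filter
            (fun X => X ≤ wRow l m i I ∧ NX l m i I X = u - 1) := by
    ext X
    simp only [Finset.mem_filter, Finset.mem_union, Finset.mem_Icc]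
    have hs := NX_succ (l := l) (m := m) (i := i) I X
    constructor
    · rintro ⟨h1, h2⟩
      by_cases hw : X ≤ wRow l m i I
      · rw [if_pos hw] at hs
        rcases Nat.lt_or_ge (NX l m i I X) u with h | h
        · exact Or.inr ⟨h1, hw, by omega⟩
        · exact Or.inl ⟨h1, h⟩
      · rw [if_neg hw] at hs
        exact Or.inl ⟨h1, by omega⟩
    · rintro (⟨h1, h2⟩ | ⟨h1, h2, h3⟩)
      · refine ⟨h1, ?_⟩
        split at hs <;> omega
      · rw [if_pos h2] at hs
        exact ⟨h1, by omega⟩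
  have hdisj : Disjoint
      ((Finset.Icc 1 (l 0)).filter (fun X => u ≤ NX l m i I X))
      ((Finset.Icc 1 (l 0)).filter
        (fun X => X ≤ wRow l m i I ∧ NX l m i I X = u - 1)) := by
    rw [Finset.disjoint_left]
    intro X h1 h2
    rcases Finset.mem_filter.1 h1 with ⟨_, hg1⟩
    rcases Finset.mem_filter.1 h2 with ⟨_, hg2⟩
    omega
  have hsec : (Finset.Icc 1 (l 0)).filter
      (fun X => X ≤ wRow l m i I ∧ NX l m i I X = u - 1)
      = (Finset.Icc 1 (wRow l m i I)).filter (fun X => NX l m i I X = u - 1) := by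
    ext X
    simp only [Finset.mem_filter, Finset.mem_Icc]
    constructor
    · rintro ⟨⟨h1, h2⟩, h3, h4⟩
      exact ⟨⟨h1, h3⟩, h4⟩
    · rintro ⟨⟨h1, h2⟩, h3⟩
      exact ⟨⟨h1, by omega⟩, h2, h3⟩
  unfold sAF
  rw [hsplit, Finset.card_union_of_disjoint hdisj, hsec]

variable {R C : ℕ}

lemma rowcount (hm : IsPartition m)
    (hbb : ∀ p : ℕ × ℕ, TT l m i p.1 p.2 ≠ 0 → p.1 < R ∧ p.2 < C)
    {u : ℕ} (hu : 1 ≤ u) (I J : ℕ) :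
    ((bb R C).filter (fun p => TT l m i p.1 p.2 = i + u ∧ p.1 = I ∧ J ≤ p.2)).card
      = ((Finset.Icc 1 (min (wRow l m i I) (l I - J))).filter
          (fun X => NX l m i I X = u - 1)).card := by
  apply Finset.card_bij' (fun p _ => l I - p.2) (fun X _ => (I, l I - X))
  · -- forward membership
    intro p hp
    rcases Finset.mem_filter.1 hp with ⟨hpb, hval, hI, hJ⟩
    have hchar := (TT_eq_inner_iff (l := l) hm (show i + 1 ≤ i + u by omega)).1 hval
    rcases hchar with ⟨h1, h2, h3, h4⟩
    subst hI
    have hw : wRow l m i p.1 = l p.1 - m (p.1 - i) := by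
      unfold wRow; rw [if_neg (by omega)]
    refine Finset.mem_filter.2 ⟨Finset.mem_Icc.2 ⟨by omega, ?_⟩, ?_⟩
    · refine le_min (by omega) (by omega)
    · rw [h4]; omega
  · -- backward membership
    intro X hX
    rcases Finset.mem_filter.1 hX with ⟨hXi, hXN⟩
    rcases Finset.mem_Icc.1 hXi with ⟨hX1, hX2⟩
    have hXw : X ≤ wRow l m i I := le_trans hX2 (min_le_left _ _)
    have hXJ : X ≤ l I - J := le_trans hX2 (min_le_right _ _)
    have hiI : i ≤ I := by
      by_contra h
      push_neg at h
      have : wRow l m i I = 0 := by unfold wRow; rw [if_pos h]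
      omega
    have hw : wRow l m i I = l I - m (I - i) := by
      unfold wRow; rw [if_neg (by omega)]
    have hXl : X ≤ l I := le_trans hXw (wRow_le I)
    have hval : TT l m i I (l I - X) = i + u := by
      rw [TT_eq_inner_iff (l := l) hm (show i + 1 ≤ i + u by omega)]
      refine ⟨hiI, by omega, by omega, ?_⟩
      rw [show l I - (l I - X) = X by omega, hXN]
      omega
    have hbbm := hbb (I, l I - X) (by simp only; omega)
    refine Finset.mem_filter.2 ⟨mem_bb.2 hbbm, hval, rfl, by omega⟩
  · -- left inverse
    intro p hp
    rcases Finset.mem_filter.1 hp with ⟨hpb, hval, hI, hJ⟩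
    have hchar := (TT_eq_inner_iff (l := l) hm (show i + 1 ≤ i + u by omega)).1 hval
    rcases hchar with ⟨h1, h2, h3, h4⟩
    have : l I - (l I - p.2) = p.2 := by subst hI; omega
    rw [this, ← hI]
  · -- right inverse
    intro X hX
    rcases Finset.mem_filter.1 hX with ⟨hXi, hXN⟩
    rcases Finset.mem_Icc.1 hXi with ⟨hX1, hX2⟩
    have hXl : X ≤ l I := le_trans (le_trans hX2 (min_le_left _ _)) (wRow_le I)
    simp only
    omega

lemma cumcount (hl : IsPartition l) (hm : IsPartition m)
    (hbb : ∀ p : ℕ × ℕ, TT l m i p.1 p.2 ≠ 0 → p.1 < R ∧ p.2 < C)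
    {u : ℕ} (hu : 1 ≤ u) :
    ∀ I, ((bb R C).filter (fun p => TT l m i p.1 p.2 = i + u ∧ p.1 < I)).card
      = sAF l m i u I := by
  intro I
  induction I with
  | zero =>
    rw [Finset.filter_false_of_mem (by intro p _; rintro ⟨_, h⟩; omega)]
    have : ∀ X ∈ Finset.Icc 1 (l 0), ¬ (u ≤ NX l m i 0 X) := by
      intro X _
      have : NX l m i 0 X = 0 := by
        unfold NX; rw [Finset.range_zero, Finset.filter_empty, Finset.card_empty]
      omega
    unfold sAF
    rw [Finset.filter_false_of_mem this]
    simp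
  | succ I ih =>
    have hsplit : (bb R C).filter (fun p => TT l m i p.1 p.2 = i + u ∧ p.1 < I + 1)
        = (bb R C).filter (fun p => TT l m i p.1 p.2 = i + u ∧ p.1 < I)
          ∪ (bb R C).filter (fun p => TT l m i p.1 p.2 = i + u ∧ p.1 = I ∧ 0 ≤ p.2) := by
      ext p
      simp only [Finset.mem_filter, Finset.mem_union]
      constructor
      · rintro ⟨h1, h2, h3⟩
        rcases Nat.lt_or_ge p.1 I with h | h
        · exact Or.inl ⟨h1, h2, h⟩
        · exact Or.inr ⟨h1, h2, by omega, Nat.zero_le _⟩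
      · rintro (⟨h1, h2, h3⟩ | ⟨h1, h2, h3, _⟩)
        · exact ⟨h1, h2, by omega⟩
        · exact ⟨h1, h2, by omega⟩
    have hdisj : Disjoint
        ((bb R C).filter (fun p => TT l m i p.1 p.2 = i + u ∧ p.1 < I))
        ((bb R C).filter (fun p => TT l m i p.1 p.2 = i + u ∧ p.1 = I ∧ 0 ≤ p.2)) := by
      rw [Finset.disjoint_left]
      intro p h1 h2
      rcases Finset.mem_filter.1 h1 with ⟨_, _, hg1⟩
      rcases Finset.mem_filter.1 h2 with ⟨_, _, hg2, _⟩
      omega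
    rw [hsplit, Finset.card_union_of_disjoint hdisj, ih,
      rowcount (l := l) hm hbb hu I 0, sAF_succ (l := l) (m := m) hl hu I]
    congr 2
    have : min (wRow l m i I) (l I - 0) = wRow l m i I := by
      have := wRow_le (l := l) (m := m) (i := i) I
      omega
    rw [this]

/-- the prefix-count formula for values `≥ i+1`. -/
lemma cntTT (hl : IsPartition l) (hm : IsPartition m)
    (hbb : ∀ p : ℕ × ℕ, TT l m i p.1 p.2 ≠ 0 → p.1 < R ∧ p.2 < C)
    {u : ℕ} (hu : 1 ≤ u) (a b : ℕ) :
    cntF (TT l m i) R C (i + u) a b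
      = sAF l m i u a
        + (min (min (wRow l m i a) (l a - b)) (sAF l m i (u - 1) a)
            - min (min (wRow l m i a) (l a - b)) (sAF l m i u a)) := by
  set K := min (wRow l m i a) (l a - b) with hK
  have hKl : K ≤ l 0 := by
    have h1 : K ≤ wRow l m i a := min_le_left _ _
    have h2 := wRow_le (l := l) (m := m) (i := i) a
    have h3 := hl.1 (Nat.zero_le a)
    omega
  have hsplit : (bb R C).filter
        (fun p => TT l m i p.1 p.2 = i + u ∧ (p.1 < a ∨ (p.1 = a ∧ b ≤ p.2)))
      = (bb R C).filter (fun p => TT l m i p.1 p.2 = i + u ∧ p.1 < a)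
        ∪ (bb R C).filter (fun p => TT l m i p.1 p.2 = i + u ∧ p.1 = a ∧ b ≤ p.2) := by
    ext p
    simp only [Finset.mem_filter, Finset.mem_union]
    constructor
    · rintro ⟨h1, h2, h3 | h3⟩
      · exact Or.inl ⟨h1, h2, h3⟩
      · exact Or.inr ⟨h1, h2, h3⟩
    · rintro (⟨h1, h2, h3⟩ | ⟨h1, h2, h3⟩)
      · exact ⟨h1, h2, Or.inl h3⟩
      · exact ⟨h1, h2, Or.inr h3⟩
  have hdisj : Disjoint
      ((bb R C).filter (fun p => TT l m i p.1 p.2 = i + u ∧ p.1 < a))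
      ((bb R C).filter (fun p => TT l m i p.1 p.2 = i + u ∧ p.1 = a ∧ b ≤ p.2)) := by
    rw [Finset.disjoint_left]
    intro p h1 h2
    rcases Finset.mem_filter.1 h1 with ⟨_, _, hg1⟩
    rcases Finset.mem_filter.1 h2 with ⟨_, _, hg2, _⟩
    omega
  unfold cntF
  rw [hsplit, Finset.card_union_of_disjoint hdisj, cumcount hl hm hbb hu a,
    rowcount (l := l) hm hbb hu a b, Kcount (l := l) (m := m) (i := i) hKl hu a]

lemma lattice_high (hl : IsPartition l) (hm : IsPartition m)
    (hbb : ∀ p : ℕ × ℕ, TT l m i p.1 p.2 ≠ 0 → p.1 < R ∧ p.2 < C)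
    {u : ℕ} (hu : 1 ≤ u) (a b : ℕ) :
    cntF (TT l m i) R C (i + u + 1) a b ≤ cntF (TT l m i) R C (i + u) a b := by
  have h1 := cntTT (R := R) (C := C) hl hm hbb (show 1 ≤ u + 1 by omega) a b
  have h2 := cntTT (R := R) (C := C) hl hm hbb hu a b
  rw [show i + (u + 1) = i + u + 1 by omega] at h1
  rw [h1, h2]
  have e1 : u + 1 - 1 = u := by omega
  rw [e1]
  have hs1 := sAF_anti (l := l) (m := m) (i := i) (show u - 1 ≤ u by omega) a
  have hs2 := sAF_anti (l := l) (m := m) (i := i) (show u ≤ u + 1 by omega) a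
  omega

lemma lattice_all (hl : IsPartition l) (hm : IsPartition m)
    (hbb : ∀ p : ℕ × ℕ, TT l m i p.1 p.2 ≠ 0 → p.1 < R ∧ p.2 < C)
    (a b k : ℕ) :
    cntF (TT l m i) R C (k + 2) a b ≤ cntF (TT l m i) R C (k + 1) a b := by
  rcases le_or_gt (k + 2) (i + 1) with hlow | hhigh
  · -- injection p ↦ (p.1 - 1, p.2)
    apply Finset.card_le_card_of_injOn (fun p => (p.1 - 1, p.2))
    · intro p hp
      rcases Finset.mem_filter.1 hp with ⟨hpb, hval, hpre⟩
      have habove := TT_above (i := i) hl hm (show 2 ≤ k + 2 by omega) hlow hval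
      rcases habove with ⟨hr1, hvv⟩
      rcases mem_bb.1 hpb with ⟨hb1, hb2⟩
      refine Finset.mem_filter.2 ⟨mem_bb.2 ⟨by dsimp only; omega, by dsimp only; omega⟩, ?_, ?_⟩
      · simp only
        rw [hvv]
        omega
      · rcases hpre with h | ⟨h, _⟩
        · exact Or.inl (by simp only; omega)
        · exact Or.inl (by simp only; omega)
    · intro p hp q hq he
      rcases Finset.mem_filter.1 hp with ⟨_, hvalp, _⟩
      rcases Finset.mem_filter.1 hq with ⟨_, hvalq, _⟩
      have hp1 := (TT_above (i := i) hl hm (show 2 ≤ k + 2 by omega) hlow hvalp).1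
      have hq1 := (TT_above (i := i) hl hm (show 2 ≤ k + 2 by omega) hlow hvalq).1
      have he' : (p.1 - 1, p.2) = (q.1 - 1, q.2) := he
      obtain ⟨e1, e2⟩ := Prod.mk.inj he'
      have : p.1 = q.1 := by omega
      exact Prod.ext this e2
  · have hu : 1 ≤ k + 1 - i := by omega
    have e1 : k + 2 = i + (k + 1 - i) + 1 := by omega
    have e2 : k + 1 = i + (k + 1 - i) := by omega
    rw [e1, e2]
    have := lattice_high (R := R) (C := C) hl hm hbb hu a b
    convert this using 3
    omega

lemma TT_le_val (r c : ℕ) (hm : IsPartition m) : TT l m i r c ≤ i + 1 + r := by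
  by_cases hin : m r ≤ c ∧ c < l r
  · by_cases hA : i ≤ r ∧ m (r - i) ≤ c
    · rw [TT_inner hin hA.1 hA.2]
      have := NX_le (l := l) (m := m) (i := i) r (l r - c)
      omega
    · rw [TT_strip hin hA]
      have := dpt_le_strip (i := i) hm hA
      omega
  · rw [TT_zero hin]; omega

lemma TT_bb (hl : IsPartition l) {R : ℕ} (hR : ∀ j, R ≤ j → l j = 0) :
    ∀ p : ℕ × ℕ, TT l m i p.1 p.2 ≠ 0 → p.1 < R ∧ p.2 < l 0 := by
  intro p hp
  have hin := (TT_support (l := l) (m := m) (i := i) p).1 hp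
  rcases hin with ⟨h1, h2⟩
  constructor
  · by_contra h; push_neg at h; rw [hR p.1 h] at h2; omega
  · exact lt_of_lt_of_le h2 (hl.1 (Nat.zero_le _))

lemma supp_bound {n : ℕ → ℕ} {T : ℕ → ℕ → ℕ} (hl : IsPartition l) {R : ℕ}
    (hR : ∀ j, R ≤ j → l j = 0) (hT : IsLR l m n T) :
    ∀ p : ℕ × ℕ, T p.1 p.2 ≠ 0 → p.1 < R ∧ p.2 < l 0 := by
  intro p hp
  have hin := (hT.support p).1 hp
  rcases hin with ⟨h1, h2⟩
  constructor
  · by_contra h; push_neg at h; rw [hR p.1 h] at h2; omega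
  · exact lt_of_lt_of_le h2 (hl.1 (Nat.zero_le _))

lemma finite_LR (hl : IsPartition l) {R : ℕ} (hR : ∀ j, R ≤ j → l j = 0)
    {n : ℕ → ℕ} (V : ℕ) (hnV : ∀ k, V ≤ k → n k = 0) :
    Finite {T' : ℕ → ℕ → ℕ // IsLR l m n T'} := by
  have hval : ∀ (T' : ℕ → ℕ → ℕ), IsLR l m n T' → ∀ r c, T' r c < V + 1 := by
    intro T' hT' r c
    by_cases h0 : T' r c = 0
    · omega
    · by_contra hbig
      push_neg at hbig
      have hz : n (T' r c - 1) = 0 := hnV _ (by omega)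
      have hcard := hT'.content (T' r c - 1)
      rw [natCard_eq' T' (supp_bound hl hR hT') (by omega)] at hcard
      have hne : T' (r, c).1 (r, c).2 ≠ 0 := by dsimp only; omega
      have hmem : (r, c) ∈ (bb R (l 0)).filter (fun p => T' p.1 p.2 = T' r c - 1 + 1) := by
        refine Finset.mem_filter.2 ⟨mem_bb.2 (supp_bound hl hR hT' (r, c) hne), by dsimp only; omega⟩
      have hpos : 0 < ((bb R (l 0)).filter (fun p => T' p.1 p.2 = T' r c - 1 + 1)).card :=
        Finset.card_pos.2 ⟨_, hmem⟩
      omega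
  set f : {T' : ℕ → ℕ → ℕ // IsLR l m n T'} → ({x // x ∈ bb R (l 0)} → Fin (V + 1)) :=
    fun Tp q => ⟨Tp.1 q.1.1 q.1.2, hval Tp.1 Tp.2 q.1.1 q.1.2⟩ with hf
  have hinj : Function.Injective f := by
    rintro ⟨T1, h1⟩ ⟨T2, h2⟩ heq
    apply Subtype.ext
    funext r c
    by_cases hmem : (r, c) ∈ bb R (l 0)
    · have h := congrFun heq ⟨(r, c), hmem⟩
      exact congrArg Fin.val h
    · have e1 : T1 r c = 0 := by
        by_contra h
        exact hmem (mem_bb.2 (supp_bound hl hR h1 (r, c) h))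
      have e2 : T2 r c = 0 := by
        by_contra h
        exact hmem (mem_bb.2 (supp_bound hl hR h2 (r, c) h))
      exact e1.trans e2.symm
  exact Finite.of_injective f hinj

/-- the content of the constructed tableau. -/
noncomputable def nCon (l m : ℕ → ℕ) (i : ℕ) : ℕ → ℕ :=
  fun k => Nat.card {p : ℕ × ℕ // TT l m i p.1 p.2 = k + 1}

lemma isLR_TT (hl : IsPartition l) (hm : IsPartition m) {R : ℕ}
    (hR : ∀ j, R ≤ j → l j = 0) :
    IsLR l m (nCon l m i) (TT l m i) := by
  have hbb := TT_bb (m := m) (i := i) hl hR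
  refine ⟨TT_support, ?_, ?_, fun k => rfl, ?_⟩
  · intro r c h1 h2
    exact TT_row_weak hl hm h1 h2
  · intro r c h1 h2
    exact TT_col_strict hl hm h1 h2
  · intro a b k
    have key := lattice_all (R := R) (C := l 0) hl hm hbb a b k
    rw [natCard_eq (TT l m i) hbb (by omega) (fun p => (p.1 < a ∨ (p.1 = a ∧ b ≤ p.2))),
      natCard_eq (TT l m i) hbb (by omega) (fun p => (p.1 < a ∨ (p.1 = a ∧ b ≤ p.2)))]
    exact key

lemma nCon_cards (hl : IsPartition l) {R : ℕ}
    (hR : ∀ j, R ≤ j → l j = 0) (v : ℕ) :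
    nCon l m i v = ((bb R (l 0)).filter (fun p => TT l m i p.1 p.2 = v + 1)).card := by
  have hbb := TT_bb (m := m) (i := i) hl hR
  exact natCard_eq' (TT l m i) hbb (by omega)

lemma nCon_partition (hl : IsPartition l) (hm : IsPartition m) {R : ℕ}
    (hR : ∀ j, R ≤ j → l j = 0) : IsPartition (nCon l m i) := by
  have hbb := TT_bb (m := m) (i := i) hl hR
  constructor
  · -- weakly decreasing; step case first
    have hstep : ∀ k, nCon l m i (k + 1) ≤ nCon l m i k := by
      intro k
      have key := lattice_all (R := R) (C := l 0) hl hm hbb R 0 k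
      have he : ∀ v, 1 ≤ v →
          ((bb R (l 0)).filter (fun p => TT l m i p.1 p.2 = v)).card
          = cntF (TT l m i) R (l 0) v R 0 := by
        intro v _
        unfold cntF
        congr 1
        ext p
        simp only [Finset.mem_filter]
        constructor
        · rintro ⟨h1, h2⟩
          rcases mem_bb.1 h1 with ⟨hb1, _⟩
          exact ⟨h1, h2, Or.inl hb1⟩
        · rintro ⟨h1, h2, _⟩
          exact ⟨h1, h2⟩
      rw [nCon_cards hl hR (k + 1), nCon_cards hl hR k]
      rw [show k + 1 + 1 = k + 2 by omega]
      rw [he (k + 2) (by omega), he (k + 1) (by omega)]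
      exact key
    intro a b hab
    induction b with
    | zero => have : a = 0 := by omega
              subst this; exact le_refl _
    | succ b' ih =>
      rcases Nat.lt_or_ge a (b' + 1) with h | h
      · exact le_trans (hstep b') (ih (by omega))
      · have : a = b' + 1 := by omega
        subst this; exact le_refl _
  · refine ⟨i + R + 1, fun k hk => ?_⟩
    rw [nCon_cards hl hR k]
    rw [Finset.card_eq_zero, Finset.filter_eq_empty_iff]
    intro p hp
    rcases mem_bb.1 hp with ⟨hb1, _⟩
    have := TT_le_val (l := l) (i := i) p.1 p.2 hm
    omega

lemma nCon_le_sSup (hl : IsPartition l) (hm : IsPartition m) {R : ℕ}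
    (hR : ∀ j, R ≤ j → l j = 0) :
    nCon l m i i ≤ sSup {x | ∃ j : ℕ, x = l (i + j) - m j} := by
  have hbb := TT_bb (m := m) (i := i) hl hR
  have hBbdd : BddAbove {x | ∃ j : ℕ, x = l (i + j) - m j} := by
    refine ⟨l 0, ?_⟩
    rintro x ⟨j, rfl⟩
    have := hl.1 (Nat.zero_le (i + j))
    omega
  have h1 : nCon l m i i
      = ((bb R (l 0)).filter (fun p => TT l m i p.1 p.2 = i + 1)).card :=
    nCon_cards hl hR i
  have h2 : ((bb R (l 0)).filter (fun p => TT l m i p.1 p.2 = i + 1)).card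
      = sAF l m i 1 R := by
    rw [← cumcount (R := R) (C := l 0) hl hm hbb (le_refl 1) R]
    congr 1
    ext p
    simp only [Finset.mem_filter]
    constructor
    · rintro ⟨hp1, hp2⟩
      rcases mem_bb.1 hp1 with ⟨hb1, _⟩
      exact ⟨hp1, by rw [hp2], hb1⟩
    · rintro ⟨hp1, hp2, _⟩
      exact ⟨hp1, by omega⟩
  rw [h1, h2]
  have hsub : (Finset.Icc 1 (l 0)).filter (fun X => 1 ≤ NX l m i R X)
      ⊆ Finset.Icc 1 (sSup {x | ∃ j : ℕ, x = l (i + j) - m j}) := by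
    intro X hX
    rcases Finset.mem_filter.1 hX with ⟨hX1, hX2⟩
    rcases Finset.mem_Icc.1 hX1 with ⟨hXa, hXb⟩
    have hpos : 0 < ((Finset.range R).filter (fun j => X ≤ wRow l m i j)).card := hX2
    obtain ⟨j, hj⟩ := Finset.card_pos.1 hpos
    rcases Finset.mem_filter.1 hj with ⟨hj1, hj2⟩
    have hji : i ≤ j := by
      by_contra h
      push_neg at h
      have : wRow l m i j = 0 := by unfold wRow; rw [if_pos h]
      omega
    have hw : wRow l m i j = l j - m (j - i) := by
      unfold wRow; rw [if_neg (by omega)]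
    have hmem : wRow l m i j ∈ {x | ∃ j' : ℕ, x = l (i + j') - m j'} := by
      refine ⟨j - i, ?_⟩
      rw [hw, show i + (j - i) = j by omega]
    have hle := le_csSup hBbdd hmem
    refine Finset.mem_Icc.2 ⟨hXa, by omega⟩
  calc sAF l m i 1 R ≤ (Finset.Icc 1 (sSup {x | ∃ j : ℕ, x = l (i + j) - m j})).card :=
        Finset.card_le_card hsub
    _ = _ := by rw [Nat.card_Icc]; omega

end Constr

end Stmt5

/-- The `i`-th part (0-indexed) of the base partition of `[l / m]` equals
`max_j max(0, l_{i+j} - m_j)` (0-indexed `j`), i.e. the largest row of the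
diagram obtained from `l / m` by removing the top `i` boxes of every column. -/
theorem stmt5 (l m : ℕ → ℕ) (hl : IsPartition l) (hm : IsPartition m)
    (hml : ∀ i, m i ≤ l i) :
    ∀ i : ℕ,
      sInf {x | ∃ n, IsPartition n ∧ LR l m n ≠ 0 ∧ n i = x} =
        sSup {x | ∃ j : ℕ, x = l (i + j) - m j} := by
  intro i
  obtain ⟨R, hR⟩ := hl.2
  have hBne : {x | ∃ j : ℕ, x = l (i + j) - m j}.Nonempty := ⟨l (i + 0) - m 0, 0, rfl⟩
  have hLR0 : LR l m (Stmt5.nCon l m i) ≠ 0 := by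
    have hfin : Finite {T' : ℕ → ℕ → ℕ // IsLR l m (Stmt5.nCon l m i) T'} := by
      obtain ⟨V, hV⟩ := (Stmt5.nCon_partition (i := i) hl hm hR).2
      exact Stmt5.finite_LR hl hR V hV
    have hne : Nonempty {T' : ℕ → ℕ → ℕ // IsLR l m (Stmt5.nCon l m i) T'} :=
      ⟨⟨Stmt5.TT l m i, Stmt5.isLR_TT hl hm hR⟩⟩
    have : Nat.card {T' : ℕ → ℕ → ℕ // IsLR l m (Stmt5.nCon l m i) T'} ≠ 0 :=
      Nat.card_ne_zero.2 ⟨hne, hfin⟩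
    exact this
  have hmemS : Stmt5.nCon l m i i ∈ {x | ∃ n, IsPartition n ∧ LR l m n ≠ 0 ∧ n i = x} :=
    ⟨_, Stmt5.nCon_partition hl hm hR, hLR0, rfl⟩
  apply le_antisymm
  · exact le_trans (csInf_le (OrderBot.bddBelow _) hmemS) (Stmt5.nCon_le_sSup hl hm hR)
  · apply le_csInf ⟨_, hmemS⟩
    rintro x ⟨n', hpart', hLR', rfl⟩
    apply csSup_le hBne
    rintro y ⟨j, rfl⟩
    have hcard : Nat.card {T' : ℕ → ℕ → ℕ // IsLR l m n' T'} ≠ 0 := hLR'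
    obtain ⟨⟨T', hT'⟩⟩ := (Nat.card_ne_zero.1 hcard).1
    exact Stmt5.lower_main hl hm hT' hR i j
end

section
/- A rectangle (m^l) is contained (as a subdiagram, possibly after rotation by 180°) in a skew diagram λ/μ if and only if there exists an index j such that λ_{j+l−1} − μ_j ≥ m (with the convention μ_j = 0 for j beyond the length of μ). In words, the maximal rectangles contained in a skew diagram are detected by comparing row j of μ with row j+l−1 of λ. -/
/-- A rectangle `(M^L)` is contained in the skew diagram `l / m` if and only if
there is an index `j` with `l (j + (L-1)) - m j ≥ M` (0-indexed rows). -/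
theorem stmt6 (l m : ℕ → ℕ) (hl : IsPartition l) (hm : IsPartition m)
    (hml : ∀ i, m i ≤ l i) (M L : ℕ) (hM : 1 ≤ M) (hL : 1 ≤ L) :
    ContainedIn (fun i => if i < L then M else 0) l m ↔
      ∃ j : ℕ, M + m j ≤ l (j + (L - 1)) := by
  constructor
  · rintro (⟨r, c, h⟩ | ⟨r, c, h⟩)
    · refine ⟨r, ?_⟩
      have h1 := h 0 0 (by dsimp only; rw [if_pos (by omega : 0 < L)]; omega)
      have h2 := h (L - 1) (M - 1) (by dsimp only; rw [if_pos (by omega : L - 1 < L)]; omega)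
      simp only [InSkew, Nat.add_zero] at h1 h2
      have hml1 : m r ≤ c := h1.1
      have : c + (M - 1) < l (r + (L - 1)) := h2.2
      omega
    · have h1 := h 0 0 (by dsimp only; rw [if_pos (by omega : 0 < L)]; omega)
      have h2 := h (L - 1) (M - 1) (by dsimp only; rw [if_pos (by omega : L - 1 < L)]; omega)
      obtain ⟨hLr, hMc, h2s⟩ := h2
      simp only [Nat.sub_zero] at h1
      refine ⟨r - (L - 1), ?_⟩
      have hrw : r - (L - 1) + (L - 1) = r := by omega
      rw [hrw]
      simp only [InSkew] at h1 h2s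
      have := h1.2.2.2
      have := h2s.1
      omega
  · rintro ⟨j, hj⟩
    left
    refine ⟨j, m j, ?_⟩
    intro i col hcol
    by_cases hi : i < L
    · simp only [hi, if_true] at hcol
      have hmono : m (j + i) ≤ m j := hm.1 (Nat.le_add_right j i)
      have hle : l (j + (L - 1)) ≤ l (j + i) := hl.1 (by omega)
      refine ⟨?_, ?_⟩ <;> dsimp only <;> omega
    · simp [hi] at hcol
end
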